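/- arXiv:2201.10229 — 2 statements merged into one kernel-verified Lean document; each statement's English description precedes it below -/
import Mathlib

section
/- Let p be an odd prime and i ∈ ℤ. (1) In the 1-dimensional σ-hermitian space 𝐕^{an} = ℚ_{p²} with form {x,y} = x·σ(y), the unique ℤ_{p²}-lattice Λ' satisfying p^{i+1}(Λ')^∨ ⊆ Λ' ⊆ p^i(Λ')^∨ is Λ' = p^{⌊(i+1)/2⌋}ℤ_{p²}. (2) In the 2-dimensional σ-hermitian space 𝐕^{an} = ℚ_{p²}·f₀ ⊕ ℚ_{p²}·f₁ with form determined by {f₀,f₀} = 1, {f₁,f₁} = p, {f₀,f₁} = {f₁,f₀} = 0, the unique ℤ_{p²}-lattice Λ' satisfying p^{i+1}(Λ')^∨ ⊆ Λ' ⊆ p^i(Λ')^∨ is Λ' = p^{⌊(i+1)/2⌋}ℤ_{p²}·f₀ ⊕ p^{⌊i/2⌋}ℤ_{p²}·f₁. -/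
set_option synthInstance.maxHeartbeats 1000000
set_option maxHeartbeats 1000000


/-!
The hermitian space `𝐕 = ℚ_{p²}^n` of the unitary Rapoport–Zink space of signature
`(1,n-1)`, its lattices `𝓛_i` with their types, and the unitary similitude group
`J = GU(𝐕)`.  Here `ℤ_{p²} = W(𝔽_{p²})` and `ℚ_{p²}` is its fraction field; `σ` is
induced by the Witt vector Frobenius.  Writing `m = ⌊(n-1)/2⌋`, the basis
`e_{-m},…,e_{-1},e₀ˣ,e₁,…,e_m` (odd `n`), resp.
`e_{-m},…,e_{-1},e₀ˣ,e₁ˣ,e₁,…,e_m` (even `n`), is indexed by `Fin n` in this order,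
and the Gram matrix of the σ-hermitian form `{·,·}` is the antidiagonal matrix for
odd `n`, resp. the antidiagonal matrix with middle 2×2 block `diag(1,p)` for even `n`.
-/

noncomputable section

/-- `ℤ_{p²} = W(𝔽_{p²})`, the ring of Witt vectors of the field with `p²` elements. -/
abbrev Zp2 (p : ℕ) [Fact p.Prime] : Type := WittVector p (GaloisField p 2)

/-- `ℚ_{p²}`, the fraction field of `ℤ_{p²}`. -/
abbrev Qp2 (p : ℕ) [Fact p.Prime] : Type := FractionRing (Zp2 p)

/-- The Frobenius `σ` of `ℚ_{p²}`, induced by the Witt vector Frobenius. -/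
def frob (p : ℕ) [Fact p.Prime] : Qp2 p ≃+* Qp2 p :=
  IsFractionRing.ringEquivOfRingEquiv (WittVector.frobeniusEquiv p (GaloisField p 2))

/-- The Gram matrix of the σ-hermitian form `{·,·}` on `𝐕 = ℚ_{p²}^n` in the fixed
basis: for odd `n` it is the antidiagonal matrix; for even `n` the two middle basis
vectors `e₀ˣ, e₁ˣ` (at positions `(n-2)/2` and `(n-2)/2 + 1`) pair with themselves to
`1` and `p` respectively, and all other pairings are antidiagonal. -/
def gram (p n : ℕ) [Fact p.Prime] : Matrix (Fin n) (Fin n) (Qp2 p) :=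
  Matrix.of fun i j =>
    if Odd n then (if (i : ℕ) + (j : ℕ) = n - 1 then 1 else 0)
    else if (i : ℕ) = (n - 2) / 2 ∧ (j : ℕ) = (n - 2) / 2 then 1
    else if (i : ℕ) = (n - 2) / 2 + 1 ∧ (j : ℕ) = (n - 2) / 2 + 1 then (p : Qp2 p)
    else if (i : ℕ) + (j : ℕ) = n - 1 ∧ (i : ℕ) ≠ (n - 2) / 2 ∧ (i : ℕ) ≠ (n - 2) / 2 + 1 then 1
    else 0

/-- The nondegenerate σ-hermitian form `{x,y} = ∑ᵢⱼ xᵢ · gramᵢⱼ · σ(yⱼ)`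
(σ-linear in the second variable). -/
def hform (p n : ℕ) [Fact p.Prime] (x y : Fin n → Qp2 p) : Qp2 p :=
  ∑ i : Fin n, ∑ j : Fin n, x i * gram p n i j * frob p (y j)

/-- A lattice: a finitely generated `ℤ_{p²}`-submodule of `𝐕` containing a
`ℚ_{p²}`-basis of `𝐕`. -/
def IsLattice (p n : ℕ) [Fact p.Prime] (L : Submodule (Zp2 p) (Fin n → Qp2 p)) : Prop :=
  L.FG ∧ Submodule.span (Qp2 p) (L : Set (Fin n → Qp2 p)) = ⊤

/-- The dual lattice `M^∨ = {v : {v,w} ∈ ℤ_{p²} for all w ∈ M}`. -/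
def dualLat (p n : ℕ) [Fact p.Prime] (L : Submodule (Zp2 p) (Fin n → Qp2 p)) :
    Submodule (Zp2 p) (Fin n → Qp2 p) where
  carrier := {v | ∀ w ∈ L, hform p n v w ∈ (algebraMap (Zp2 p) (Qp2 p)).range}
  add_mem' := by
    intro a b ha hb w hw
    have h : hform p n (a + b) w = hform p n a w + hform p n b w := by
      simp [hform, add_mul, Finset.sum_add_distrib]
    rw [h]
    exact add_mem (ha w hw) (hb w hw)
  zero_mem' := by
    intro w hw
    have h : hform p n 0 w = 0 := by simp [hform]
    rw [h]
    exact zero_mem _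
  smul_mem' := by
    intro c v hv w hw
    have h : hform p n (c • v) w = algebraMap (Zp2 p) (Qp2 p) c * hform p n v w := by
      simp [hform, Finset.mul_sum, Algebra.smul_def, mul_assoc]
    rw [h]
    exact mul_mem (RingHom.mem_range_self _ c) (hv w hw)

/-- The scaled lattice `c · L = {c • x : x ∈ L}`. -/
def scaleLat (p n : ℕ) [Fact p.Prime] (c : Qp2 p) (L : Submodule (Zp2 p) (Fin n → Qp2 p)) :
    Submodule (Zp2 p) (Fin n → Qp2 p) :=
  L.map (LinearMap.restrictScalars (Zp2 p) (LinearMap.lsmul (Qp2 p) (Fin n → Qp2 p) c))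

/-- `Λ ∈ 𝓛_i`:  `Λ` is a lattice with `p^{i+1}Λ^∨ ⊊ Λ ⊆ p^{i}Λ^∨`. -/
def inL (p n : ℕ) [Fact p.Prime] (i : ℤ) (Λ : Submodule (Zp2 p) (Fin n → Qp2 p)) : Prop :=
  IsLattice p n Λ ∧
    scaleLat p n ((p : Qp2 p) ^ (i + 1)) (dualLat p n Λ) < Λ ∧
    Λ ≤ scaleLat p n ((p : Qp2 p) ^ i) (dualLat p n Λ)

/-- `Λ ∈ 𝓛 = ⋃_{ni even} 𝓛_i`. -/
def inLL (p n : ℕ) [Fact p.Prime] (Λ : Submodule (Zp2 p) (Fin n → Qp2 p)) : Prop :=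
  ∃ i : ℤ, Even ((n : ℤ) * i) ∧ inL p n i Λ

/-- The length of a `ℤ_{p²}`-module (the Krull dimension of its submodule lattice). -/
def mlen (p : ℕ) [Fact p.Prime] (M : Type) [AddCommGroup M] [Module (Zp2 p) M] : ℕ∞ :=
  WithBot.unbotD 0 (Order.krullDim (Submodule (Zp2 p) M))

/-- The index `[M₂ : M₁]`: the length of the `ℤ_{p²}`-module `M₂ / M₁` (for `M₁ ⊆ M₂`). -/
def relIdx (p n : ℕ) [Fact p.Prime] (M₁ M₂ : Submodule (Zp2 p) (Fin n → Qp2 p)) : ℕ∞ :=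
  mlen p (M₂ ⧸ Submodule.comap M₂.subtype M₁)

/-- The type `t(Λ) = [Λ : p^{i+1} Λ^∨]` of `Λ ∈ 𝓛_i`. -/
def typeOf (p n : ℕ) [Fact p.Prime] (i : ℤ) (Λ : Submodule (Zp2 p) (Fin n → Qp2 p)) : ℕ∞ :=
  relIdx p n (scaleLat p n ((p : Qp2 p) ^ (i + 1)) (dualLat p n Λ)) Λ

/-- `g ∈ J = GU(𝐕)`: a `ℚ_{p²}`-linear automorphism with `{gx,gy} = c(g)·{x,y}` for a
σ-fixed multiplier `c(g) ∈ ℚ_{p²}ˣ`. -/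
def inJ (p n : ℕ) [Fact p.Prime] (g : (Fin n → Qp2 p) ≃ₗ[Qp2 p] (Fin n → Qp2 p)) : Prop :=
  ∃ c : Qp2 p, c ≠ 0 ∧ frob p c = c ∧ ∀ x y, hform p n (g x) (g y) = c * hform p n x y

/-- The image `g(Λ)` of a lattice under a `ℚ_{p²}`-linear automorphism. -/
def mapLat (p n : ℕ) [Fact p.Prime] (g : (Fin n → Qp2 p) ≃ₗ[Qp2 p] (Fin n → Qp2 p))
    (Λ : Submodule (Zp2 p) (Fin n → Qp2 p)) : Submodule (Zp2 p) (Fin n → Qp2 p) :=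
  Λ.map (LinearMap.restrictScalars (Zp2 p) g.toLinearMap)

/-- The lattice `Λ(a) = ⟨ p^{a j} e_j : j ⟩` with diagonal exponents `a : Fin n → ℤ`. -/
def diagLat (p n : ℕ) [Fact p.Prime] (a : Fin n → ℤ) : Submodule (Zp2 p) (Fin n → Qp2 p) :=
  Submodule.span (Zp2 p)
    (Set.range fun j : Fin n => ((p : Qp2 p) ^ (a j)) • (Pi.single j 1 : Fin n → Qp2 p))

namespace S9

variable {p : ℕ} [Fact p.Prime]

local notation "R" => Zp2 p
local notation "K" => Qp2 p
local notation "φ" => algebraMap (Zp2 p) (Qp2 p)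

lemma inj : Function.Injective (φ) := IsFractionRing.injective _ _

lemma pR_ne : (p : R) ≠ 0 := (WittVector.irreducible p).ne_zero

lemma pK : φ (p : R) = (p : K) := map_natCast _ _

lemma pK_ne : (p : K) ≠ 0 := by
  rw [← pK]
  exact (map_ne_zero_iff _ inj).mpr pR_ne

lemma zpow_ne (m : ℤ) : (p : K) ^ m ≠ 0 := zpow_ne_zero _ pK_ne

lemma pmul (m l : ℤ) : (p : K) ^ m * (p : K) ^ l = (p : K) ^ (m + l) :=
  (zpow_add₀ pK_ne m l).symm

/-- `x ∈ p^m ℤ_{p²}`. -/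
def pmem (m : ℤ) (x : K) : Prop := ∃ r : R, x = φ r * (p : K) ^ m

lemma pmem_zero (m : ℤ) : pmem (p := p) m 0 := ⟨0, by simp⟩

lemma pmem_natpow_cast (k : ℕ) : φ ((p : R) ^ k) = (p : K) ^ (k : ℤ) := by
  rw [map_pow, pK, zpow_natCast]

lemma pmem_mono {m' m : ℤ} (h : m' ≤ m) {x : K} (hx : pmem m x) : pmem m' x := by
  obtain ⟨r, rfl⟩ := hx
  refine ⟨r * (p : R) ^ (m - m').toNat, ?_⟩
  rw [map_mul, pmem_natpow_cast, Int.toNat_of_nonneg (by omega)]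
  rw [mul_assoc, pmul]
  ring_nf

lemma pmem_add {m : ℤ} {x y : K} (hx : pmem m x) (hy : pmem m y) : pmem m (x + y) := by
  obtain ⟨r, rfl⟩ := hx; obtain ⟨s, rfl⟩ := hy
  exact ⟨r + s, by rw [map_add]; ring⟩

lemma pmem_neg {m : ℤ} {x : K} (hx : pmem m x) : pmem m (-x) := by
  obtain ⟨r, rfl⟩ := hx
  exact ⟨-r, by rw [map_neg]; ring⟩

lemma pmem_sub {m : ℤ} {x y : K} (hx : pmem m x) (hy : pmem m y) : pmem m (x - y) := by
  rw [sub_eq_add_neg]; exact pmem_add hx (pmem_neg hy)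

lemma pmem_mul {m l : ℤ} {x y : K} (hx : pmem m x) (hy : pmem l y) : pmem (m + l) (x * y) := by
  obtain ⟨r, rfl⟩ := hx; obtain ⟨s, rfl⟩ := hy
  refine ⟨r * s, by rw [map_mul, ← pmul]; ring⟩

lemma pmem_unit_pow (u : Rˣ) {m γ : ℤ} : pmem m (φ ↑u * (p : K) ^ γ) ↔ m ≤ γ := by
  constructor
  · rintro ⟨r, hr⟩
    by_contra hlt
    push_neg at hlt
    have h2 : φ ↑u = φ (r * (p : R) ^ (m - γ).toNat) := by
      rw [map_mul, pmem_natpow_cast, Int.toNat_of_nonneg (by omega)]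
      have h0 : φ ↑u = φ r * (p : K) ^ m * ((p : K) ^ γ)⁻¹ := by
        rw [← hr, mul_assoc, mul_inv_cancel₀ (zpow_ne γ), mul_one]
      rw [h0, mul_assoc, ← zpow_neg, pmul, ← sub_eq_add_neg]
    have h3 : (u : R) = r * (p : R) ^ (m - γ).toNat := inj h2
    have h4 : (p : R) ∣ (u : R) := by
      rw [h3]
      refine Dvd.dvd.mul_left ?_ r
      exact dvd_pow_self _ (by omega)
    exact (WittVector.irreducible p).not_isUnit
      (isUnit_of_dvd_unit h4 u.isUnit)
  · intro h
    refine ⟨↑u * (p : R) ^ (γ - m).toNat, ?_⟩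
    rw [map_mul, pmem_natpow_cast, Int.toNat_of_nonneg (by omega), mul_assoc, pmul]
    ring_nf

lemma pmem_pow {m γ : ℤ} : pmem (p := p) m ((p : K) ^ γ) ↔ m ≤ γ := by
  have := pmem_unit_pow (p := p) 1 (m := m) (γ := γ)
  simpa using this

lemma exists_rep {x : K} (hx : x ≠ 0) : ∃ (γ : ℤ) (u : Rˣ), x = φ ↑u * (p : K) ^ γ := by
  obtain ⟨a, s, hs, hx'⟩ := IsFractionRing.div_surjective (A := R) x
  have hsne : s ≠ 0 := nonZeroDivisors.ne_zero hs
  have hane : a ≠ 0 := by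
    intro h
    rw [h] at hx'
    simp at hx'
    exact hx hx'.symm
  obtain ⟨m, u₁, hu₁⟩ := WittVector.exists_eq_pow_p_mul' a hane
  obtain ⟨n, u₂, hu₂⟩ := WittVector.exists_eq_pow_p_mul' s hsne
  refine ⟨(m : ℤ) - n, u₁ * u₂⁻¹, ?_⟩
  rw [← hx', hu₁, hu₂]
  have h2 : φ ↑u₂ ≠ 0 := (map_ne_zero_iff _ inj).mpr u₂.ne_zero
  have h3 : φ ↑u₂⁻¹ = (φ ↑u₂)⁻¹ := by
    have h4 : φ ↑u₂⁻¹ * φ ↑u₂ = 1 := by rw [← map_mul]; simp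
    exact eq_inv_of_mul_eq_one_left h4
  rw [map_mul, map_mul, pmem_natpow_cast, pmem_natpow_cast, Units.val_mul, map_mul, h3,
    zpow_sub₀ (pK_ne)]
  field_simp

lemma pmem_split_aux {m j k : ℤ} (hjk : j < k) (u w : Rˣ)
    (h : pmem m (φ ↑u * (p : K) ^ j + φ ↑w * (p : K) ^ k)) :
    pmem m (φ ↑u * (p : K) ^ j) ∧ pmem m (φ ↑w * (p : K) ^ k) := by
  by_cases hm : m ≤ j
  · exact ⟨(pmem_unit_pow u).mpr hm, (pmem_unit_pow w).mpr (by omega)⟩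
  · exfalso
    have h1 : pmem (j + 1) (φ ↑u * (p : K) ^ j + φ ↑w * (p : K) ^ k) :=
      pmem_mono (by omega) h
    have h2 : pmem (j + 1) (φ ↑w * (p : K) ^ k) := (pmem_unit_pow w).mpr (by omega)
    have h3 : pmem (j + 1) (φ ↑u * (p : K) ^ j) := by
      have := pmem_sub h1 h2
      simpa using this
    have := (pmem_unit_pow u).mp h3
    omega

lemma pmem_split {m j k : ℤ} (hjk : j ≠ k) (u w : Rˣ)
    (h : pmem m (φ ↑u * (p : K) ^ j + φ ↑w * (p : K) ^ k)) :
    pmem m (φ ↑u * (p : K) ^ j) ∧ pmem m (φ ↑w * (p : K) ^ k) := by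
  rcases lt_or_gt_of_ne hjk with hlt | hgt
  · exact pmem_split_aux hlt u w h
  · have := pmem_split_aux hgt w u (by rwa [add_comm] at h)
    exact ⟨this.2, this.1⟩

lemma frob_int (r : R) : frob p (φ r) = φ (WittVector.frobeniusEquiv p (GaloisField p 2) r) :=
  IsFractionRing.ringEquivOfRingEquiv_algebraMap _ r

lemma frob_pK : frob p (p : K) = (p : K) := map_natCast _ _

lemma frob_zpow (γ : ℤ) : frob p ((p : K) ^ γ) = (p : K) ^ γ := by
  rw [map_zpow₀, frob_pK]

lemma frob_rep (u : Rˣ) (γ : ℤ) :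
    ∃ u' : Rˣ, frob p (φ ↑u * (p : K) ^ γ) = φ ↑u' * (p : K) ^ γ := by
  refine ⟨Units.map (WittVector.frobeniusEquiv p (GaloisField p 2)).toRingHom.toMonoidHom u, ?_⟩
  rw [map_mul, frob_zpow, frob_int]
  rfl


lemma pmem_iff_span {m : ℤ} {x : K} : pmem m x ↔ x ∈ Submodule.span R {(p : K) ^ m} := by
  rw [Submodule.mem_span_singleton]
  constructor
  · rintro ⟨r, rfl⟩; exact ⟨r, Algebra.smul_def r _⟩
  · rintro ⟨r, rfl⟩; exact ⟨r, Algebra.smul_def r _⟩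

lemma bound_finset (S : Finset K) : ∃ γ : ℤ, ∀ x ∈ S, pmem γ x := by
  classical
  refine Finset.induction_on S ⟨0, by simp⟩ ?_
  rintro a s _ ⟨γ', hγ'⟩
  by_cases ha0 : a = 0
  · refine ⟨γ', fun x hx => ?_⟩
    rcases Finset.mem_insert.mp hx with rfl | hx
    · rw [ha0]; exact pmem_zero _
    · exact hγ' x hx
  · obtain ⟨α, u, rfl⟩ := exists_rep ha0
    refine ⟨min α γ', fun x hx => ?_⟩
    rcases Finset.mem_insert.mp hx with rfl | hx
    · exact (pmem_unit_pow u).mpr (min_le_left _ _)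
    · exact pmem_mono (min_le_right _ _) (hγ' x hx)

lemma pow_mem_of_unit_mem {u : Rˣ} {γ : ℤ} {M : Submodule R K}
    (h : φ ↑u * (p : K) ^ γ ∈ M) : (p : K) ^ γ ∈ M := by
  have h2 := M.smul_mem (↑u⁻¹ : R) h
  rw [Algebra.smul_def, ← mul_assoc, ← map_mul] at h2
  simpa using h2

lemma fg_submodule (M : Submodule R K) (hfg : M.FG) (hne : M ≠ ⊥) :
    ∃ γ : ℤ, M = Submodule.span R {(p : K) ^ γ} := by
  classical
  obtain ⟨S, rfl⟩ := hfg
  obtain ⟨γ₀, hγ₀⟩ := bound_finset S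
  have hex : ∃ x ∈ S, x ≠ 0 := by
    by_contra hc
    push_neg at hc
    exact hne (Submodule.span_eq_bot.mpr (by exact_mod_cast hc))
  obtain ⟨x0, hx0S, hx0⟩ := hex
  obtain ⟨α, u, rfl⟩ := exists_rep hx0
  have hα : γ₀ ≤ α := (pmem_unit_pow u).mp (hγ₀ _ hx0S)
  have hDex : ∃ d : ℕ, ∀ x ∈ S, pmem (α - d) x := by
    refine ⟨(α - γ₀).toNat, fun x hx => ?_⟩
    exact pmem_mono (by omega) (hγ₀ x hx)
  have hall : ∀ x ∈ S, pmem (α - Nat.find hDex) x := Nat.find_spec hDex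
  have hwit : (p : K) ^ (α - (Nat.find hDex : ℤ)) ∈ Submodule.span R (S : Set K) := by
    rcases Nat.eq_zero_or_pos (Nat.find hDex) with hN0 | hNpos
    · rw [hN0]
      push_cast
      rw [sub_zero]
      exact pow_mem_of_unit_mem (Submodule.subset_span hx0S)
    · have hmin := Nat.find_min hDex (show Nat.find hDex - 1 < Nat.find hDex by omega)
      push_neg at hmin
      obtain ⟨x, hxS, hxn⟩ := hmin
      have hxne : x ≠ 0 := fun h => hxn (h ▸ pmem_zero _)
      obtain ⟨β, v, rfl⟩ := exists_rep hxne
      have h1 : α - (Nat.find hDex : ℤ) ≤ β := (pmem_unit_pow v).mp (hall _ hxS)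
      have h2 : ¬(α - ((Nat.find hDex - 1 : ℕ) : ℤ) ≤ β) :=
        fun hle => hxn ((pmem_unit_pow v).mpr hle)
      have hβ : β = α - (Nat.find hDex : ℤ) := by omega
      rw [← hβ]
      exact pow_mem_of_unit_mem (Submodule.subset_span hxS)
  refine ⟨α - Nat.find hDex, le_antisymm ?_ ?_⟩
  · rw [Submodule.span_le]
    intro x hx
    exact pmem_iff_span.mp (hall x hx)
  · rw [Submodule.span_le, Set.singleton_subset_iff]
    exact hwit

lemma exists_clear (c : K) : ∃ (M : ℕ) (r : R), (p : K) ^ M * c = φ r := by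
  obtain ⟨a, s, hs, hc⟩ := IsFractionRing.div_surjective (A := R) c
  have hsne : s ≠ 0 := nonZeroDivisors.ne_zero hs
  obtain ⟨n, u, hu⟩ := WittVector.exists_eq_pow_p_mul' s hsne
  have h2 : φ ↑u ≠ 0 := (map_ne_zero_iff _ inj).mpr u.ne_zero
  have hpn : (p : K) ^ n ≠ 0 := pow_ne_zero _ pK_ne
  refine ⟨n, a * ↑u⁻¹, ?_⟩
  have h3 : φ ↑u⁻¹ = (φ ↑u)⁻¹ := eq_inv_of_mul_eq_one_left (by rw [← map_mul]; simp)
  rw [← hc, hu, map_mul, map_mul, map_pow, pK, h3]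
  field_simp

lemma fg_inf {n : ℕ} (Λ L : Submodule R (Fin n → K)) (hΛ : Λ.FG) : (Λ ⊓ L).FG := by
  haveI := WittVector.isDiscreteValuationRing (p := p) (k := GaloisField p 2)
  haveI : IsNoetherianRing R := inferInstance
  haveI : IsNoetherian R Λ := isNoetherian_of_fg_of_noetherian _ hΛ
  have h1 : ((Λ ⊓ L).comap Λ.subtype).FG := IsNoetherian.noetherian _
  have h2 := h1.map Λ.subtype
  rwa [Submodule.map_comap_subtype, ← inf_assoc, inf_idem] at h2

section Pi

lemma range_zpow {m : ℤ} (h : 0 ≤ m) : (p : K) ^ m ∈ (algebraMap (Zp2 p) (Qp2 p)).range :=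
  ⟨(p : R) ^ m.toNat, by rw [pmem_natpow_cast, Int.toNat_of_nonneg h]⟩

lemma gram1 (i j : Fin 1) : gram p 1 i j = 1 := by
  fin_cases i; fin_cases j
  simp [gram]

lemma hform1 (x y : Fin 1 → K) : hform p 1 x y = x 0 * frob p (y 0) := by
  simp [hform, Fin.sum_univ_one, gram1]

lemma gram2_00 : gram p 2 0 0 = 1 := by norm_num [gram]
lemma gram2_11 : gram p 2 1 1 = (p : K) := by norm_num [gram]
lemma gram2_01 : gram p 2 0 1 = 0 := by norm_num [gram]
lemma gram2_10 : gram p 2 1 0 = 0 := by norm_num [gram]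

lemma hform2 (x y : Fin 2 → K) :
    hform p 2 x y = x 0 * frob p (y 0) + x 1 * ((p : K) * frob p (y 1)) := by
  simp [hform, Fin.sum_univ_two, gram2_00, gram2_11, gram2_01, gram2_10]
  ring

lemma hform_add_right (n : ℕ) (x y z : Fin n → K) :
    hform p n x (y + z) = hform p n x y + hform p n x z := by
  unfold hform
  rw [← Finset.sum_add_distrib]
  refine Finset.sum_congr rfl fun i _ => ?_
  rw [← Finset.sum_add_distrib]
  refine Finset.sum_congr rfl fun j _ => ?_
  rw [Pi.add_apply, map_add]
  ring

lemma hform_smul_right (n : ℕ) (r : R) (x y : Fin n → K) :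
    hform p n x (r • y) = φ (WittVector.frobeniusEquiv p (GaloisField p 2) r) * hform p n x y := by
  unfold hform
  rw [Finset.mul_sum]
  refine Finset.sum_congr rfl fun i _ => ?_
  rw [Finset.mul_sum]
  refine Finset.sum_congr rfl fun j _ => ?_
  rw [Pi.smul_apply, Algebra.smul_def, map_mul, frob_int]
  ring

lemma hform_zero_right (n : ℕ) (x : Fin n → K) : hform p n x 0 = 0 := by
  simp [hform]

lemma hform_smul_left (n : ℕ) (c : K) (x y : Fin n → K) :
    hform p n (c • x) y = c * hform p n x y := by
  unfold hform
  rw [Finset.mul_sum]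
  refine Finset.sum_congr rfl fun i _ => ?_
  rw [Finset.mul_sum]
  refine Finset.sum_congr rfl fun j _ => ?_
  rw [Pi.smul_apply, smul_eq_mul]
  ring

lemma rsmulK (r : R) (x : K) : r • x = φ r * x := Algebra.smul_def r x

lemma mem_dual_iff {n : ℕ} (L : Submodule R (Fin n → K)) (v : Fin n → K) :
    v ∈ dualLat p n L ↔ ∀ w ∈ L, hform p n v w ∈ (algebraMap (Zp2 p) (Qp2 p)).range :=
  Iff.rfl

lemma mem_dual_of_gens {n : ℕ} {S : Set (Fin n → K)} {v : Fin n → K}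
    (h : ∀ g ∈ S, hform p n v g ∈ (algebraMap (Zp2 p) (Qp2 p)).range) :
    v ∈ dualLat p n (Submodule.span R S) := by
  rw [mem_dual_iff]
  intro w hw
  induction hw using Submodule.span_induction with
  | mem g hg => exact h g hg
  | zero => rw [hform_zero_right]; exact zero_mem _
  | add u w hu hw hu' hw' => rw [hform_add_right]; exact add_mem hu' hw'
  | smul r u hu hu' =>
      rw [hform_smul_right]
      exact mul_mem (RingHom.mem_range_self _ _) hu'

lemma mem_scale_iff {n : ℕ} {c : K} (hc : c ≠ 0) {L : Submodule R (Fin n → K)}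
    {z : Fin n → K} : z ∈ scaleLat p n c L ↔ c⁻¹ • z ∈ L := by
  rw [scaleLat, Submodule.mem_map]
  constructor
  · rintro ⟨x, hx, rfl⟩
    simpa [smul_smul, inv_mul_cancel₀ hc, mul_inv_cancel₀ hc] using hx
  · intro h
    exact ⟨c⁻¹ • z, h, by simp [smul_smul, inv_mul_cancel₀ hc, mul_inv_cancel₀ hc]⟩

lemma smul_mem_scale {n : ℕ} (c : K) {L : Submodule R (Fin n → K)} {v : Fin n → K}
    (hv : v ∈ L) : c • v ∈ scaleLat p n c L := ⟨v, hv, rfl⟩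

lemma islattice_diag (n : ℕ) (a : Fin n → ℤ) : IsLattice p n (diagLat p n a) := by
  constructor
  · exact Submodule.fg_span (Set.finite_range _)
  · rw [eq_top_iff]
    rintro x -
    have h1 : ∀ j : Fin n, Pi.single j (1 : K) ∈
        Submodule.span K (diagLat p n a : Set (Fin n → K)) := by
      intro j
      have h2 : ((p : K) ^ (a j)) • Pi.single j 1 ∈ diagLat p n a :=
        Submodule.subset_span ⟨j, rfl⟩
      have h3 := Submodule.smul_mem (Submodule.span K (diagLat p n a : Set (Fin n → K)))
        ((p : K) ^ (-a j)) (Submodule.subset_span h2)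
      rwa [smul_smul, pmul, show -a j + a j = 0 by ring, zpow_zero, one_smul] at h3
    have hx : x = ∑ j, x j • Pi.single j (1 : K) := by
      funext k
      rw [Finset.sum_apply]
      simp [Pi.single_apply]
    rw [hx]
    exact Submodule.sum_mem _ fun j _ => Submodule.smul_mem _ _ (h1 j)

lemma exists_clear' (c : K) : ∃ (M : ℕ) (r : R), (p : K) ^ M * c = φ r := exists_clear c

lemma pow_smul_mem {n : ℕ} (Λ : Submodule R (Fin n → K)) {x : Fin n → K}
    (hx : x ∈ Λ) (k : ℕ) : (p : K) ^ k • x ∈ Λ := by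
  have h := Λ.smul_mem ((p : R) ^ k) hx
  rwa [← algebraMap_smul (Qp2 p) ((p : R) ^ k) x, map_pow, pK] at h

lemma exists_pow_smul_mem {n : ℕ} (Λ : Submodule R (Fin n → K))
    (hs : Submodule.span K (Λ : Set (Fin n → K)) = ⊤) (v : Fin n → K) :
    ∃ N : ℕ, (p : K) ^ N • v ∈ Λ := by
  have hv : v ∈ Submodule.span K (Λ : Set (Fin n → K)) := hs ▸ Submodule.mem_top
  induction hv using Submodule.span_induction with
  | mem x hx => exact ⟨0, by simpa using hx⟩
  | zero => exact ⟨0, by simp⟩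
  | add x y hx hy ihx ihy =>
      obtain ⟨N₁, h₁⟩ := ihx; obtain ⟨N₂, h₂⟩ := ihy
      refine ⟨max N₁ N₂, ?_⟩
      rw [smul_add]
      refine Submodule.add_mem _ ?_ ?_
      · have h3 := pow_smul_mem Λ h₁ (max N₁ N₂ - N₁)
        rwa [smul_smul, ← pow_add, Nat.sub_add_cancel (le_max_left _ _)] at h3
      · have h3 := pow_smul_mem Λ h₂ (max N₁ N₂ - N₂)
        rwa [smul_smul, ← pow_add, Nat.sub_add_cancel (le_max_right _ _)] at h3
  | smul c x hx ihx =>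
      obtain ⟨N, hN⟩ := ihx
      obtain ⟨M, r, hr⟩ := exists_clear c
      refine ⟨M + N, ?_⟩
      have h2 : (p : K) ^ (M + N) • c • x = r • ((p : K) ^ N • x) := by
        rw [← algebraMap_smul (Qp2 p) r ((p : K) ^ N • x), ← hr]
        rw [smul_smul, smul_smul]
        congr 1
        rw [pow_add]; ring
      rw [h2]
      exact Λ.smul_mem _ hN

lemma pairA {n : ℕ} {i : ℤ} {Λ : Submodule R (Fin n → K)}
    (hA : Λ ≤ scaleLat p n ((p : K) ^ i) (dualLat p n Λ))
    {x y : Fin n → K} (hx : x ∈ Λ) (hy : y ∈ Λ) : pmem i (hform p n x y) := by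
  have h1 := hA hx
  rw [mem_scale_iff (zpow_ne i)] at h1
  rw [mem_dual_iff] at h1
  have h2 := h1 y hy
  rw [hform_smul_left] at h2
  obtain ⟨r, hr⟩ := h2
  refine ⟨r, ?_⟩
  rw [hr, mul_comm (((p : K) ^ i)⁻¹) _ , mul_assoc, inv_mul_cancel₀ (zpow_ne i), mul_one]

end Pi

section One

lemma diag1 (a : Fin 1 → ℤ) :
    diagLat p 1 a = Submodule.span R {(fun _ => (p : K) ^ (a 0) : Fin 1 → K)} := by
  unfold diagLat
  rw [Set.range_unique]
  congr 1
  rw [Set.singleton_eq_singleton_iff]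
  funext j
  rw [Subsingleton.elim (default : Fin 1) (0 : Fin 1), Subsingleton.elim j (0 : Fin 1)]
  rw [Pi.smul_apply, Pi.single_eq_same, smul_eq_mul, mul_one]

lemma mem_span_g1 {γ : ℤ} {z : Fin 1 → K} :
    z ∈ Submodule.span R {(fun _ => (p : K) ^ γ : Fin 1 → K)} ↔ pmem γ (z 0) := by
  rw [Submodule.mem_span_singleton]
  constructor
  · rintro ⟨r, rfl⟩
    exact ⟨r, by simp [Algebra.smul_def]⟩
  · rintro ⟨r, hr⟩
    refine ⟨r, ?_⟩
    funext j
    rw [Subsingleton.elim j (0 : Fin 1), Pi.smul_apply, Algebra.smul_def, hr]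

lemma fwd1 {i : ℤ} {Λ : Submodule R (Fin 1 → K)} (hlat : IsLattice p 1 Λ)
    (hB : scaleLat p 1 ((p : K) ^ (i + 1)) (dualLat p 1 Λ) ≤ Λ)
    (hA : Λ ≤ scaleLat p 1 ((p : K) ^ i) (dualLat p 1 Λ)) :
    Λ = diagLat p 1 (fun _ => (i + 1) / 2) := by
  classical
  set l0 : (Fin 1 → K) →ₗ[R] K :=
    ((LinearMap.proj 0 : (Fin 1 → K) →ₗ[K] K).restrictScalars R) with hl0
  have happ : ∀ z : Fin 1 → K, l0 z = z 0 := fun z => rfl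
  have hNfg : (Λ.map l0).FG := hlat.1.map _
  have hNne : Λ.map l0 ≠ ⊥ := by
    obtain ⟨N, hN⟩ := exists_pow_smul_mem Λ hlat.2 (Pi.single 0 1)
    rw [Submodule.ne_bot_iff]
    refine ⟨(p : K) ^ N, ⟨_, hN, by simp [happ]⟩, pow_ne_zero _ pK_ne⟩
  obtain ⟨γ, hγ⟩ := fg_submodule _ hNfg hNne
  have hpγ : (p : K) ^ γ ∈ Λ.map l0 := by rw [hγ]; exact Submodule.subset_span rfl
  obtain ⟨w, hwΛ, hw0⟩ := Submodule.mem_map.mp hpγ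
  rw [happ] at hw0
  have hwg : w = (fun _ => (p : K) ^ γ) := by
    funext j; rw [Subsingleton.elim j (0 : Fin 1)]; exact hw0
  have hset : Λ = Submodule.span R {(fun _ => (p : K) ^ γ : Fin 1 → K)} := by
    refine le_antisymm ?_ ?_
    · intro z hz
      rw [mem_span_g1]
      have hz0 : z 0 ∈ Λ.map l0 := ⟨z, hz, rfl⟩
      rw [hγ] at hz0
      exact pmem_iff_span.mpr hz0
    · rw [Submodule.span_le, Set.singleton_subset_iff]
      rw [← hwg]
      exact hwΛ
  have hAA : pmem i ((p : K) ^ (γ + γ)) := by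
    have h1 := pairA hA hwΛ hwΛ
    rwa [hform1, hw0, frob_zpow, pmul] at h1
  have hiA : i ≤ γ + γ := pmem_pow.mp hAA
  have hv : (fun _ => (p : K) ^ (-γ) : Fin 1 → K) ∈ dualLat p 1 Λ := by
    rw [hset]
    refine mem_dual_of_gens ?_
    rintro g hg
    rw [Set.mem_singleton_iff] at hg
    subst hg
    rw [hform1, frob_zpow]
    show (p : K) ^ (-γ) * (p : K) ^ γ ∈ _
    rw [pmul, show -γ + γ = 0 by ring, zpow_zero]
    exact ⟨1, map_one _⟩
  have hmem := hB (smul_mem_scale ((p : K) ^ (i + 1)) hv)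
  rw [hset, mem_span_g1] at hmem
  have hmem2 : pmem γ ((p : K) ^ (i + 1 + -γ)) := by
    rwa [Pi.smul_apply, smul_eq_mul, pmul] at hmem
  have hiB : γ ≤ i + 1 + -γ := pmem_pow.mp hmem2
  have hγval : γ = (i + 1) / 2 := by omega
  rw [hset, diag1, hγval]

lemma bwd1 {i : ℤ} :
    IsLattice p 1 (diagLat p 1 (fun _ => (i + 1) / 2)) ∧
    scaleLat p 1 ((p : K) ^ (i + 1)) (dualLat p 1 (diagLat p 1 (fun _ => (i + 1) / 2))) ≤
      diagLat p 1 (fun _ => (i + 1) / 2) ∧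
    diagLat p 1 (fun _ => (i + 1) / 2) ≤
      scaleLat p 1 ((p : K) ^ i) (dualLat p 1 (diagLat p 1 (fun _ => (i + 1) / 2))) := by
  have h1 : i ≤ (i + 1) / 2 + (i + 1) / 2 := by omega
  have h2 : (i + 1) / 2 + (i + 1) / 2 ≤ i + 1 := by omega
  set γ := (i + 1) / 2 with hγdef
  have hset : diagLat p 1 (fun _ => (i + 1) / 2)
      = Submodule.span R {(fun _ => (p : K) ^ γ : Fin 1 → K)} := diag1 _
  refine ⟨islattice_diag 1 _, ?_, ?_⟩
  · intro z hz
    rw [mem_scale_iff (zpow_ne _), mem_dual_iff] at hz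
    have hg : (fun _ => (p : K) ^ γ : Fin 1 → K) ∈ diagLat p 1 (fun _ => (i + 1) / 2) := by
      rw [hset]; exact Submodule.subset_span rfl
    have h3 := hz _ hg
    rw [hform1, frob_zpow] at h3
    obtain ⟨r, hr⟩ := h3
    rw [hset, mem_span_g1]
    have h4 : z 0 = φ r * (p : K) ^ (i + 1 + -γ) := by
      rw [hr, Pi.smul_apply, smul_eq_mul, ← zpow_neg]
      rw [mul_assoc (((p : K) ^ (-(i + 1))) * z 0), pmul,
        show γ + (i + 1 + -γ) = i + 1 by ring]
      rw [mul_comm ((p : K) ^ (-(i + 1))) (z 0), mul_assoc, pmul,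
        show -(i + 1) + (i + 1) = 0 by ring, zpow_zero, mul_one]
    exact pmem_mono (by omega) ⟨r, h4⟩
  · rw [hset, Submodule.span_le, Set.singleton_subset_iff]
    rw [SetLike.mem_coe, mem_scale_iff (zpow_ne i)]
    refine mem_dual_of_gens ?_
    rintro g hg
    rw [Set.mem_singleton_iff] at hg
    subst hg
    rw [hform_smul_left, hform1, frob_zpow, ← zpow_neg]
    show (p : K) ^ (-i) * ((p : K) ^ γ * (p : K) ^ γ) ∈ _
    rw [pmul, pmul]
    exact range_zpow (by omega)

lemma part1 (i : ℤ) (Λ : Submodule R (Fin 1 → K)) :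
    (IsLattice p 1 Λ ∧
      scaleLat p 1 ((p : K) ^ (i + 1)) (dualLat p 1 Λ) ≤ Λ ∧
      Λ ≤ scaleLat p 1 ((p : K) ^ i) (dualLat p 1 Λ)) ↔
    Λ = diagLat p 1 (fun _ => (i + 1) / 2) := by
  constructor
  · rintro ⟨hl, hb, ha⟩; exact fwd1 hl hb ha
  · rintro rfl
    exact ⟨bwd1.1, bwd1.2.1, bwd1.2.2⟩

end One

section Two

/-- `w = (p^aa, c)`. -/
def wv (aa : ℤ) (c : K) : Fin 2 → K := fun j => if j = 0 then (p : K) ^ aa else c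
/-- `(0, p^b)`. -/
def gv (b : ℤ) : Fin 2 → K := fun j => if j = 0 then 0 else (p : K) ^ b
/-- `(p^aa, 0)`. -/
def fv (aa : ℤ) : Fin 2 → K := fun j => if j = 0 then (p : K) ^ aa else 0

@[simp] lemma fv0 (aa : ℤ) : fv (p := p) aa 0 = (p : K) ^ aa := by simp [fv]
@[simp] lemma fv1 (aa : ℤ) : fv (p := p) aa 1 = 0 := by norm_num [fv]
@[simp] lemma gv0 (b : ℤ) : gv (p := p) b 0 = 0 := by simp [gv]
@[simp] lemma gv1 (b : ℤ) : gv (p := p) b 1 = (p : K) ^ b := by norm_num [gv]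

lemma pmulp (m : ℤ) : (p : K) ^ m * (p : K) = (p : K) ^ (m + 1) := by
  have h := pmul (p := p) m 1; rwa [zpow_one] at h

lemma pmul' (l : ℤ) : (p : K) * (p : K) ^ l = (p : K) ^ (1 + l) := by
  have h := pmul (p := p) 1 l; rwa [zpow_one] at h

lemma pmul1 (m l : ℤ) : (p : K) ^ m * ((p : K) * (p : K) ^ l) = (p : K) ^ (m + (1 + l)) := by
  rw [pmul' l, pmul]

lemma fin2_ext {x y : Fin 2 → K} (h0 : x 0 = y 0) (h1 : x 1 = y 1) : x = y := by
  funext j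
  fin_cases j
  · exact h0
  · exact h1

lemma range_fin2 {α : Type} (f : Fin 2 → α) : Set.range f = {f 0, f 1} := by
  ext x
  constructor
  · rintro ⟨j, rfl⟩
    fin_cases j
    · exact Set.mem_insert _ _
    · exact Set.mem_insert_of_mem _ rfl
  · rintro (rfl | h)
    · exact ⟨0, rfl⟩
    · rw [Set.mem_singleton_iff] at h; exact ⟨1, h.symm⟩

lemma diag2 (e : Fin 2 → ℤ) :
    diagLat p 2 e = Submodule.span R {fv (e 0), gv (e 1)} := by
  unfold diagLat
  have h0 : ((p : K) ^ (e 0)) • (Pi.single 0 1 : Fin 2 → K) = fv (e 0) := by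
    refine fin2_ext ?_ ?_ <;> simp
  have h1 : ((p : K) ^ (e 1)) • (Pi.single 1 1 : Fin 2 → K) = gv (e 1) := by
    refine fin2_ext ?_ ?_ <;> simp
  rw [range_fin2, h0, h1]

lemma fwd2 {i : ℤ} {Λ : Submodule R (Fin 2 → K)} (hlat : IsLattice p 2 Λ)
    (hB : scaleLat p 2 ((p : K) ^ (i + 1)) (dualLat p 2 Λ) ≤ Λ)
    (hA : Λ ≤ scaleLat p 2 ((p : K) ^ i) (dualLat p 2 Λ)) :
    Λ = diagLat p 2 (fun j => if j = 0 then (i + 1) / 2 else i / 2) := by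
  classical
  set l0 : (Fin 2 → K) →ₗ[R] K :=
    ((LinearMap.proj 0 : (Fin 2 → K) →ₗ[K] K).restrictScalars R) with hl0
  set l1 : (Fin 2 → K) →ₗ[R] K :=
    ((LinearMap.proj 1 : (Fin 2 → K) →ₗ[K] K).restrictScalars R) with hl1
  have happ0 : ∀ z : Fin 2 → K, l0 z = z 0 := fun z => rfl
  have happ1 : ∀ z : Fin 2 → K, l1 z = z 1 := fun z => rfl
  -- the exponent a
  have hNfg : (Λ.map l0).FG := hlat.1.map _
  have hNne : Λ.map l0 ≠ ⊥ := by
    obtain ⟨N, hN⟩ := exists_pow_smul_mem Λ hlat.2 (Pi.single 0 1)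
    rw [Submodule.ne_bot_iff]
    refine ⟨(p : K) ^ N, ⟨_, hN, by simp [happ0]⟩, pow_ne_zero _ pK_ne⟩
  obtain ⟨a, hNa⟩ := fg_submodule _ hNfg hNne
  have hpa : (p : K) ^ a ∈ Λ.map l0 := by rw [hNa]; exact Submodule.subset_span rfl
  obtain ⟨w, hwΛ, hw0⟩ := Submodule.mem_map.mp hpa
  rw [happ0] at hw0
  set c := w 1 with hc
  -- the exponent b
  set Tsub := Λ ⊓ LinearMap.ker l0 with hTsub
  have hTfg : (Tsub.map l1).FG := (fg_inf Λ _ hlat.1).map _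
  have hTne : Tsub.map l1 ≠ ⊥ := by
    obtain ⟨N, hN⟩ := exists_pow_smul_mem Λ hlat.2 (Pi.single 1 1)
    rw [Submodule.ne_bot_iff]
    refine ⟨(p : K) ^ N, ⟨_, Submodule.mem_inf.mpr ⟨hN, LinearMap.mem_ker.mpr ?_⟩,
      by simp [happ1]⟩, pow_ne_zero _ pK_ne⟩
    rw [happ0]
    simp
  obtain ⟨b, hTb⟩ := fg_submodule _ hTfg hTne
  have hpb : (p : K) ^ b ∈ Tsub.map l1 := by rw [hTb]; exact Submodule.subset_span rfl
  obtain ⟨y, hyT, hy1⟩ := Submodule.mem_map.mp hpb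
  rw [happ1] at hy1
  have hyΛ : y ∈ Λ := hyT.1
  have hy0 : y 0 = 0 := by
    have h := LinearMap.mem_ker.mp (Submodule.mem_inf.mp hyT).2
    rwa [happ0] at h
  -- Λ = span {w, y}
  have hset : Λ = Submodule.span R {w, y} := by
    refine le_antisymm ?_ ?_
    · intro z hz
      have hz0 : z 0 ∈ Λ.map l0 := ⟨z, hz, rfl⟩
      rw [hNa] at hz0
      obtain ⟨r, hr⟩ := pmem_iff_span.mpr hz0
      have hz' : z - r • w ∈ Tsub := by
        refine Submodule.mem_inf.mpr ⟨Submodule.sub_mem _ hz (Λ.smul_mem r hwΛ),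
          LinearMap.mem_ker.mpr ?_⟩
        rw [happ0, Pi.sub_apply, Pi.smul_apply, rsmulK, hw0, hr]
        ring
      have hz1 : (z - r • w) 1 ∈ Tsub.map l1 := ⟨_, hz', rfl⟩
      rw [hTb] at hz1
      obtain ⟨s, hs⟩ := pmem_iff_span.mpr hz1
      simp only [Pi.sub_apply, Pi.smul_apply, rsmulK] at hs
      rw [Submodule.mem_span_pair]
      refine ⟨r, s, fin2_ext ?_ ?_⟩
      · simp only [Pi.add_apply, Pi.smul_apply, rsmulK]
        rw [hw0, hy0, hr]
        ring
      · simp only [Pi.add_apply, Pi.smul_apply, rsmulK]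
        rw [hy1]
        linear_combination -hs
    · rw [Submodule.span_le, Set.insert_subset_iff, Set.singleton_subset_iff]
      exact ⟨hwΛ, hyΛ⟩
  -- condition A on generators
  have hA1 : pmem i ((p : K) ^ (a + a) + c * ((p : K) * frob p c)) := by
    have h := pairA hA hwΛ hwΛ
    rwa [hform2, hw0, frob_zpow, pmul] at h
  have hA3 : pmem i ((p : K) ^ (b + (1 + b))) := by
    have h := pairA hA hyΛ hyΛ
    rw [hform2, hy0, hy1, frob_zpow, map_zero, mul_zero, zero_add, pmul1] at h
    exact h
  have hbA : i ≤ b + (1 + b) := pmem_pow.mp hA3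
  -- B with v₁ = (p^{-a}, 0)
  have hv₁ : (fv (-a)) ∈ dualLat p 2 Λ := by
    rw [hset]
    refine mem_dual_of_gens ?_
    intro g hg
    rcases Set.mem_insert_iff.mp hg with rfl | hg
    · rw [hform2, fv0, fv1, hw0, frob_zpow, zero_mul, add_zero, pmul,
        show -a + a = 0 by ring, zpow_zero]
      exact ⟨1, map_one _⟩
    · rw [Set.mem_singleton_iff] at hg
      subst hg
      rw [hform2, fv0, fv1, hy0, map_zero, mul_zero, zero_mul, add_zero]
      exact ⟨0, map_zero _⟩
  have hm₁ := hB (smul_mem_scale ((p : K) ^ (i + 1)) hv₁)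
  rw [hset, Submodule.mem_span_pair] at hm₁
  obtain ⟨r₁, s₁, hrs₁⟩ := hm₁
  have haB : a ≤ i + 1 + -a := by
    have h0 := congr_fun hrs₁ 0
    simp only [Pi.add_apply, Pi.smul_apply, rsmulK, smul_eq_mul, fv0] at h0
    rw [hw0, hy0, mul_zero, add_zero, pmul] at h0
    exact pmem_pow.mp ⟨r₁, h0.symm⟩
  -- B with v₂ = (-p^{-(a+b)}σc, p^{-(1+b)})
  set v₂ : Fin 2 → K :=
    fun j => if j = 0 then -((p : K) ^ (-(a + b)) * frob p c) else (p : K) ^ (-(1 + b))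
    with hv₂def
  have hv₂0 : v₂ 0 = -((p : K) ^ (-(a + b)) * frob p c) := by simp [hv₂def]
  have hv₂1 : v₂ 1 = (p : K) ^ (-(1 + b)) := by norm_num [hv₂def]
  have hv₂ : v₂ ∈ dualLat p 2 Λ := by
    rw [hset]
    refine mem_dual_of_gens ?_
    intro g hg
    rcases Set.mem_insert_iff.mp hg with rfl | hg
    · rw [hform2, hv₂0, hv₂1, hw0, frob_zpow]
      refine ⟨0, ?_⟩
      rw [map_zero]
      have e1 : (p : K) ^ (-(a + b)) * frob p c * (p : K) ^ a
          = (p : K) ^ (-b) * frob p c := by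
        rw [mul_right_comm, pmul, show -(a + b) + a = -b by ring]
      have e2 : (p : K) ^ (-(1 + b)) * ((p : K) * frob p c)
          = (p : K) ^ (-b) * frob p c := by
        rw [← mul_assoc, pmulp, show -(1 + b) + 1 = -b by ring]
      rw [neg_mul, e1, e2]
      ring
    · rw [Set.mem_singleton_iff] at hg
      subst hg
      rw [hform2, hv₂0, hv₂1, hy0, hy1, map_zero, mul_zero, zero_add, frob_zpow, pmul1,
        show -(1 + b) + (1 + b) = 0 by ring, zpow_zero]
      exact ⟨1, map_one _⟩
  have hm₂ := hB (smul_mem_scale ((p : K) ^ (i + 1)) hv₂)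
  rw [hset, Submodule.mem_span_pair] at hm₂
  obtain ⟨r₂, s₂, hrs₂⟩ := hm₂
  have h0 := congr_fun hrs₂ 0
  have h1 := congr_fun hrs₂ 1
  simp only [Pi.add_apply, Pi.smul_apply, rsmulK, smul_eq_mul] at h0 h1
  rw [hw0, hy0, hv₂0, mul_zero, add_zero] at h0
  rw [hy1, hv₂1] at h1
  have e0 : φ r₂ * (p : K) ^ a = -((p : K) ^ (i + 1 + -(a + b)) * frob p c) := by
    rw [h0, mul_neg, ← mul_assoc, pmul]
  have hB2 : pmem (a + b)
      ((p : K) ^ (i + 1 + -(1 + b) + a) + (p : K) ^ (i + 1 + -(a + b)) * (frob p c * c)) := by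
    refine ⟨s₂, ?_⟩
    have e1 := congrArg (fun t => t * (p : K) ^ a) h1
    have e2 : (p : K) ^ (i + 1) * (p : K) ^ (-(1 + b)) * (p : K) ^ a
        = (p : K) ^ (i + 1 + -(1 + b) + a) := by rw [pmul, pmul]
    have e4 : (p : K) ^ b * (p : K) ^ a = (p : K) ^ (a + b) := by
      rw [pmul, add_comm]
    linear_combination -e1 + c * e0 - e2 + (algebraMap (Zp2 p) (Qp2 p) s₂) * e4
  -- split into cases
  by_cases hc0 : c = 0
  · have haA : i ≤ a + a := by
      have h := hA1
      rw [hc0] at h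
      simp only [zero_mul, add_zero] at h
      exact pmem_pow.mp h
    have hbB : a + b ≤ i + 1 + -(1 + b) + a := by
      have h := hB2
      rw [hc0] at h
      simp only [map_zero, mul_zero, add_zero] at h
      exact pmem_pow.mp h
    have hae : a = (i + 1) / 2 := by omega
    have hbe : b = i / 2 := by omega
    have hwf : w = fv a := fin2_ext (by rw [hw0, fv0]) (by rw [← hc, hc0, fv1])
    have hyg : y = gv b := fin2_ext (by rw [hy0, gv0]) (by rw [hy1, gv1])
    rw [hset, diag2, hwf, hyg, hae, hbe]
    norm_num
  · obtain ⟨γ, u, hcrep⟩ := exists_rep hc0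
    obtain ⟨u', hfrep⟩ := frob_rep u γ
    have hσ : frob p c = φ ↑u' * (p : K) ^ γ := by rw [hcrep]; exact hfrep
    have key : (φ ↑u * (p : K) ^ γ) * ((p : K) * (φ ↑u' * (p : K) ^ γ))
        = φ ↑(u * u') * (p : K) ^ (γ + (1 + γ)) := by
      rw [Units.val_mul, map_mul, ← pmul γ (1 + γ), ← pmul' γ]
      ring
    have hsum : (p : K) ^ (a + a) + c * ((p : K) * frob p c)
        = φ ↑(1 : Rˣ) * (p : K) ^ (a + a) + φ ↑(u * u') * (p : K) ^ (γ + (1 + γ)) := by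
      rw [hσ, hcrep, key, show φ ↑(1 : Rˣ) = (1 : K) by simp, one_mul]
    obtain ⟨hs1, hs2⟩ := pmem_split (show a + a ≠ γ + (1 + γ) by omega) 1 (u * u')
      (by rw [← hsum]; exact hA1)
    have haA : i ≤ a + a := by
      rw [show φ ↑(1 : Rˣ) = (1 : K) by simp, one_mul] at hs1
      exact pmem_pow.mp hs1
    have hγA : i ≤ γ + (1 + γ) := (pmem_unit_pow _).mp hs2
    -- split B2
    have key2 : (p : K) ^ (i + 1 + -(a + b)) * (frob p c * c)
        = φ ↑(u' * u) * (p : K) ^ ((i + 1 + -(a + b)) + (γ + γ)) := by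
      rw [hσ, hcrep, Units.val_mul, map_mul, ← pmul (i + 1 + -(a + b)) (γ + γ), ← pmul γ γ]
      ring
    have hsum2 : (p : K) ^ (i + 1 + -(1 + b) + a) + (p : K) ^ (i + 1 + -(a + b)) * (frob p c * c)
        = φ ↑(1 : Rˣ) * (p : K) ^ (i + 1 + -(1 + b) + a)
          + φ ↑(u' * u) * (p : K) ^ ((i + 1 + -(a + b)) + (γ + γ)) := by
      rw [key2, show φ ↑(1 : Rˣ) = (1 : K) by simp, one_mul]
    obtain ⟨hs1', _⟩ := pmem_split
      (show i + 1 + -(1 + b) + a ≠ (i + 1 + -(a + b)) + (γ + γ) by omega) 1 (u' * u)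
      (by rw [← hsum2]; exact hB2)
    have hbB : a + b ≤ i + 1 + -(1 + b) + a := by
      rw [show φ ↑(1 : Rˣ) = (1 : K) by simp, one_mul] at hs1'
      exact pmem_pow.mp hs1'
    have hγb : b ≤ γ := by omega
    have hae : a = (i + 1) / 2 := by omega
    have hbe : b = i / 2 := by omega
    have hcb : pmem b c := by rw [hcrep]; exact (pmem_unit_pow u).mpr hγb
    obtain ⟨c₀, hc₀⟩ := hcb
    have hwdec : w = fv a + c₀ • y := by
      refine fin2_ext ?_ ?_
      · rw [Pi.add_apply, fv0, Pi.smul_apply, rsmulK, hy0, hw0]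
        ring
      · rw [Pi.add_apply, fv1, Pi.smul_apply, rsmulK, hy1, ← hc, hc₀]
        ring
    have hspan2 : Submodule.span R {w, y} = Submodule.span R {fv a, y} := by
      refine le_antisymm ?_ ?_ <;>
        rw [Submodule.span_le, Set.insert_subset_iff, Set.singleton_subset_iff]
      · refine ⟨?_, Submodule.subset_span (Set.mem_insert_of_mem _ rfl)⟩
        rw [SetLike.mem_coe, hwdec]
        exact Submodule.add_mem _ (Submodule.subset_span (Set.mem_insert _ _))
          (Submodule.smul_mem _ _ (Submodule.subset_span (Set.mem_insert_of_mem _ rfl)))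
      · refine ⟨?_, Submodule.subset_span (Set.mem_insert_of_mem _ rfl)⟩
        rw [SetLike.mem_coe, show fv a = w - c₀ • y by rw [hwdec, add_sub_cancel_right]]
        exact Submodule.sub_mem _ (Submodule.subset_span (Set.mem_insert _ _))
          (Submodule.smul_mem _ _ (Submodule.subset_span (Set.mem_insert_of_mem _ rfl)))
    have hyg : y = gv b := fin2_ext (by rw [hy0, gv0]) (by rw [hy1, gv1])
    rw [hset, hspan2, hyg, diag2, hae, hbe]
    norm_num

lemma bwd2 {i : ℤ} :
    IsLattice p 2 (diagLat p 2 (fun j => if j = 0 then (i + 1) / 2 else i / 2)) ∧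
    scaleLat p 2 ((p : K) ^ (i + 1))
        (dualLat p 2 (diagLat p 2 (fun j => if j = 0 then (i + 1) / 2 else i / 2))) ≤
      diagLat p 2 (fun j => if j = 0 then (i + 1) / 2 else i / 2) ∧
    diagLat p 2 (fun j => if j = 0 then (i + 1) / 2 else i / 2) ≤
      scaleLat p 2 ((p : K) ^ i)
        (dualLat p 2 (diagLat p 2 (fun j => if j = 0 then (i + 1) / 2 else i / 2))) := by
  have h1 : i ≤ (i + 1) / 2 + (i + 1) / 2 := by omega
  have h2 : (i + 1) / 2 + (i + 1) / 2 ≤ i + 1 := by omega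
  have h3 : i ≤ i / 2 + (1 + i / 2) := by omega
  have h4 : i / 2 + (1 + i / 2) ≤ i + 1 := by omega
  set a := (i + 1) / 2 with hadef
  set b := i / 2 with hbdef
  have hset : diagLat p 2 (fun j => if j = 0 then a else b)
      = Submodule.span R {fv a, gv b} := by
    rw [diag2]
    norm_num
  refine ⟨islattice_diag 2 _, ?_, ?_⟩
  · intro z hz
    rw [mem_scale_iff (zpow_ne _), mem_dual_iff] at hz
    have hfm : fv (p := p) a ∈ diagLat p 2 (fun j => if j = 0 then a else b) := by
      rw [hset]; exact Submodule.subset_span (Set.mem_insert _ _)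
    have hgm : gv (p := p) b ∈ diagLat p 2 (fun j => if j = 0 then a else b) := by
      rw [hset]; exact Submodule.subset_span (Set.mem_insert_of_mem _ rfl)
    have hf := hz _ hfm
    have hg := hz _ hgm
    rw [hform2, Pi.smul_apply, Pi.smul_apply, smul_eq_mul, smul_eq_mul, fv0, fv1, frob_zpow] at hf
    simp only [map_zero, mul_zero, add_zero] at hf
    rw [hform2, Pi.smul_apply, Pi.smul_apply, smul_eq_mul, smul_eq_mul, gv0, gv1, frob_zpow] at hg
    simp only [map_zero, mul_zero, zero_add] at hg
    obtain ⟨r, hr⟩ := hf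
    obtain ⟨s, hs⟩ := hg
    rw [hset, Submodule.mem_span_pair]
    have e0 : z 0 = φ r * (p : K) ^ (i + 1 + -a) := by
      rw [hr, ← zpow_neg, mul_assoc ((p : K) ^ (-(i + 1)) * z 0), pmul,
        show a + (i + 1 + -a) = i + 1 by ring,
        mul_comm ((p : K) ^ (-(i + 1))) (z 0), mul_assoc, pmul,
        show -(i + 1) + (i + 1) = 0 by ring, zpow_zero, mul_one]
    have e1 : z 1 = φ s * (p : K) ^ (i + 1 + -(1 + b)) := by
      rw [hs, pmul' b, ← zpow_neg, mul_assoc ((p : K) ^ (-(i + 1)) * z 1), pmul,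
        show 1 + b + (i + 1 + -(1 + b)) = i + 1 by ring,
        mul_comm ((p : K) ^ (-(i + 1))) (z 1), mul_assoc, pmul,
        show -(i + 1) + (i + 1) = 0 by ring, zpow_zero, mul_one]
    refine ⟨r * (p : R) ^ (i + 1 + -a + -a).toNat, s * (p : R) ^ (i + 1 + -(1 + b) + -b).toNat,
      fin2_ext ?_ ?_⟩
    · simp only [Pi.add_apply, Pi.smul_apply, rsmulK, fv0, gv0, map_mul]
      rw [pmem_natpow_cast, Int.toNat_of_nonneg (by omega), mul_zero, add_zero,
        mul_assoc, pmul, show i + 1 + -a + -a + a = i + 1 + -a by ring, ← e0]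
    · simp only [Pi.add_apply, Pi.smul_apply, rsmulK, fv1, gv1, map_mul]
      rw [mul_zero, zero_add, pmem_natpow_cast, Int.toNat_of_nonneg (by omega),
        mul_assoc, pmul, show i + 1 + -(1 + b) + -b + b = i + 1 + -(1 + b) by ring, ← e1]
  · rw [hset, Submodule.span_le, Set.insert_subset_iff, Set.singleton_subset_iff]
    constructor
    · rw [SetLike.mem_coe, mem_scale_iff (zpow_ne i)]
      refine mem_dual_of_gens ?_
      intro g hg
      rcases Set.mem_insert_iff.mp hg with rfl | hg
      · rw [hform_smul_left, hform2]
        simp only [fv0, fv1, frob_zpow, zero_mul, add_zero]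
        rw [← zpow_neg, pmul, pmul]
        exact range_zpow (by omega)
      · rw [Set.mem_singleton_iff] at hg
        subst hg
        rw [hform_smul_left, hform2]
        simp only [fv0, fv1, gv0, gv1, map_zero, mul_zero, zero_mul, add_zero, zero_add]
        exact ⟨0, map_zero _⟩
    · rw [SetLike.mem_coe, mem_scale_iff (zpow_ne i)]
      refine mem_dual_of_gens ?_
      intro g hg
      rcases Set.mem_insert_iff.mp hg with rfl | hg
      · rw [hform_smul_left, hform2]
        simp only [fv0, fv1, gv0, gv1, map_zero, mul_zero, zero_mul, add_zero, zero_add]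
        exact ⟨0, map_zero _⟩
      · rw [Set.mem_singleton_iff] at hg
        subst hg
        rw [hform_smul_left, hform2]
        simp only [gv0, gv1, frob_zpow, zero_mul, zero_add, map_zero, mul_zero]
        rw [pmul1, ← zpow_neg, pmul]
        exact range_zpow (by omega)

end Two

end S9

/-- In the anisotropic hermitian spaces of dimensions 1 and 2
(realized as `𝐕` for `n = 1`, with form `{x,y} = x·σ(y)`, resp. `n = 2`, with
orthogonal basis `f₀, f₁` of square-lengths `1, p`), the unique lattice `Λ'` with
`p^{i+1}(Λ')^∨ ⊆ Λ' ⊆ p^{i}(Λ')^∨` is `p^{⌊(i+1)/2⌋}ℤ_{p²}`, resp.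
`p^{⌊(i+1)/2⌋}ℤ_{p²}·f₀ ⊕ p^{⌊i/2⌋}ℤ_{p²}·f₁`. -/
theorem statement9 (p : ℕ) [Fact p.Prime] (i : ℤ) :
    (∀ Λ : Submodule (Zp2 p) (Fin 1 → Qp2 p),
      (IsLattice p 1 Λ ∧
        scaleLat p 1 ((p : Qp2 p) ^ (i + 1)) (dualLat p 1 Λ) ≤ Λ ∧
        Λ ≤ scaleLat p 1 ((p : Qp2 p) ^ i) (dualLat p 1 Λ)) ↔
      Λ = diagLat p 1 (fun _ => (i + 1) / 2)) ∧
    (∀ Λ : Submodule (Zp2 p) (Fin 2 → Qp2 p),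
      (IsLattice p 2 Λ ∧
        scaleLat p 2 ((p : Qp2 p) ^ (i + 1)) (dualLat p 2 Λ) ≤ Λ ∧
        Λ ≤ scaleLat p 2 ((p : Qp2 p) ^ i) (dualLat p 2 Λ)) ↔
      Λ = diagLat p 2 (fun j => if j = 0 then (i + 1) / 2 else i / 2)) := by
  constructor
  · intro Λ
    exact S9.part1 i Λ
  · intro Λ
    constructor
    · rintro ⟨hl, hb, ha⟩
      exact S9.fwd2 hl hb ha
    · rintro rfl
      exact ⟨S9.bwd2.1, S9.bwd2.2.1, S9.bwd2.2.2⟩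
end
end

section
/- Assume n = 3 or n = 4 (so m = 1 and the maximal type is 3). Let i ∈ ℤ with ni even, let Λ₀ ∈ 𝓛_i be a lattice of type t(Λ₀) = 1, and let Λ, Λ' ∈ 𝓛_i be two distinct lattices of maximal type t(Λ) = t(Λ') = 3 with Λ₀ ⊆ Λ and Λ₀ ⊆ Λ'. Then Λ ∩ Λ' = Λ₀. -/
/-!
The hermitian space `𝐕 = ℚ_{p²}^n` of the unitary Rapoport–Zink space of signature
`(1,n-1)`, its lattices `𝓛_i` with their types, and the unitary similitude group
`J = GU(𝐕)`.  Here `ℤ_{p²} = W(𝔽_{p²})` and `ℚ_{p²}` is its fraction field; `σ` is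
induced by the Witt vector Frobenius.  Writing `m = ⌊(n-1)/2⌋`, the basis
`e_{-m},…,e_{-1},e₀ˣ,e₁,…,e_m` (odd `n`), resp.
`e_{-m},…,e_{-1},e₀ˣ,e₁ˣ,e₁,…,e_m` (even `n`), is indexed by `Fin n` in this order,
and the Gram matrix of the σ-hermitian form `{·,·}` is the antidiagonal matrix for
odd `n`, resp. the antidiagonal matrix with middle 2×2 block `diag(1,p)` for even `n`.
-/

noncomputable section

noncomputable section

namespace St16
open Module
variable (p : ℕ) [Fact p.Prime]

instance : IsDiscreteValuationRing (Zp2 p) := WittVector.isDiscreteValuationRing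

lemma p_ne_zero : (p : Zp2 p) ≠ 0 := WittVector.p_nonzero p _

lemma pK_ne_zero : (p : Qp2 p) ≠ 0 := by
  have := IsFractionRing.injective (Zp2 p) (Qp2 p)
  intro h
  apply p_ne_zero p
  apply this
  rw [map_natCast, map_zero, h]

lemma frob_algebraMap (r : Zp2 p) :
    frob p (algebraMap (Zp2 p) (Qp2 p) r) =
      algebraMap (Zp2 p) (Qp2 p) (WittVector.frobeniusEquiv p (GaloisField p 2) r) :=
  IsFractionRing.ringEquivOfRingEquiv_algebraMap _ _

lemma frobeniusEquiv_frobeniusEquiv (x : Zp2 p) :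
    WittVector.frobeniusEquiv p (GaloisField p 2)
      (WittVector.frobeniusEquiv p (GaloisField p 2) x) = x := by
  letI : Fintype (GaloisField p 2) := Fintype.ofFinite _
  have hcard : Fintype.card (GaloisField p 2) = p ^ 2 := by
    have := GaloisField.card p 2 (by norm_num)
    rwa [Nat.card_eq_fintype_card] at this
  apply WittVector.ext
  intro n
  simp only [WittVector.frobeniusEquiv_apply]
  rw [WittVector.coeff_frobenius_charP, WittVector.coeff_frobenius_charP]
  rw [← pow_mul, ← pow_two, ← hcard]
  exact FiniteField.pow_card _

lemma frob_frob (x : Qp2 p) : frob p (frob p x) = x := by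
  obtain ⟨a, s, hs, rfl⟩ := IsFractionRing.div_surjective (A := Zp2 p) x
  rw [map_div₀, map_div₀, frob_algebraMap, frob_algebraMap, frob_algebraMap, frob_algebraMap,
    frobeniusEquiv_frobeniusEquiv, frobeniusEquiv_frobeniusEquiv]

lemma frob_mem_range {x : Qp2 p} (hx : x ∈ (algebraMap (Zp2 p) (Qp2 p)).range) :
    frob p x ∈ (algebraMap (Zp2 p) (Qp2 p)).range := by
  obtain ⟨r, rfl⟩ := hx
  exact ⟨_, (frob_algebraMap p r).symm⟩

lemma frob_sum {ι : Type*} (s : Finset ι) (f : ι → Qp2 p) :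
    frob p (∑ i ∈ s, f i) = ∑ i ∈ s, frob p (f i) :=
  map_sum (frob p).toRingHom f s

/-- clearing denominators -/
lemma exists_pow_mul_mem (x : Qp2 p) :
    ∃ N : ℕ, (p : Qp2 p) ^ N * x ∈ (algebraMap (Zp2 p) (Qp2 p)).range := by
  obtain ⟨a, s, hs, rfl⟩ := IsFractionRing.div_surjective (A := Zp2 p) x
  have hs0 : s ≠ 0 := nonZeroDivisors.ne_zero hs
  obtain ⟨N, u, hsu⟩ := IsDiscreteValuationRing.eq_unit_mul_pow_irreducible hs0
    (WittVector.irreducible p)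
  refine ⟨N, ⟨a * ↑u⁻¹, ?_⟩⟩
  have hsK : algebraMap (Zp2 p) (Qp2 p) s ≠ 0 := by
    simpa using (map_ne_zero_iff _ (IsFractionRing.injective (Zp2 p) (Qp2 p))).mpr hs0
  have hu : algebraMap (Zp2 p) (Qp2 p) ↑u⁻¹ * algebraMap (Zp2 p) (Qp2 p) ↑u = 1 := by
    rw [← map_mul, Units.inv_mul, map_one]
  have hmaps : algebraMap (Zp2 p) (Qp2 p) s = algebraMap (Zp2 p) (Qp2 p) ↑u * (p : Qp2 p) ^ N := by
    rw [hsu, map_mul, map_pow, map_natCast]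
  rw [eq_comm, mul_div_assoc', div_eq_iff hsK, map_mul, hmaps]
  linear_combination (-(algebraMap (Zp2 p) (Qp2 p) a) * (p:Qp2 p)^N) * hu


variable (p : ℕ) [Fact p.Prime] (n : ℕ)


lemma exists_pow_mul_mem_family {ι : Type*} [Fintype ι] (f : ι → Qp2 p) :
    ∃ N : ℕ, ∀ i, (p : Qp2 p) ^ N * f i ∈ (algebraMap (Zp2 p) (Qp2 p)).range := by
  have step : ∀ (x : Qp2 p) (N M : ℕ), N ≤ M →
      (p : Qp2 p) ^ N * x ∈ (algebraMap (Zp2 p) (Qp2 p)).range →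
      (p : Qp2 p) ^ M * x ∈ (algebraMap (Zp2 p) (Qp2 p)).range := by
    rintro x N M hNM ⟨r, hr⟩
    refine ⟨p ^ (M - N) * r, ?_⟩
    rw [map_mul, map_pow, map_natCast, hr, ← mul_assoc, ← pow_add]
    congr 2
    omega
  choose g hg using fun i => exists_pow_mul_mem p (f i)
  exact ⟨Finset.univ.sup g, fun i => step _ _ _ (Finset.le_sup (Finset.mem_univ i)) (hg i)⟩

lemma hform_zero_left (y : Fin n → Qp2 p) : hform p n 0 y = 0 := by simp [hform]

lemma hform_add_left (x x' y : Fin n → Qp2 p) :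
    hform p n (x + x') y = hform p n x y + hform p n x' y := by
  simp [hform, add_mul, Finset.sum_add_distrib]

lemma hform_smul_left (c : Qp2 p) (x y : Fin n → Qp2 p) :
    hform p n (c • x) y = c * hform p n x y := by
  simp only [hform, Finset.mul_sum]
  refine Finset.sum_congr rfl fun i _ => Finset.sum_congr rfl fun j _ => ?_
  simp [smul_eq_mul]; ring

lemma hform_zero_right (x : Fin n → Qp2 p) : hform p n x 0 = 0 := by simp [hform]

lemma hform_add_right (x y y' : Fin n → Qp2 p) :
    hform p n x (y + y') = hform p n x y + hform p n x y' := by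
  simp [hform, mul_add, Finset.sum_add_distrib]

lemma hform_smul_right (c : Qp2 p) (x y : Fin n → Qp2 p) :
    hform p n x (c • y) = frob p c * hform p n x y := by
  simp only [hform, Finset.mul_sum]
  refine Finset.sum_congr rfl fun i _ => Finset.sum_congr rfl fun j _ => ?_
  simp [smul_eq_mul, map_mul]; ring

lemma hform_sum_right {ι : Type*} (s : Finset ι) (x : Fin n → Qp2 p) (f : ι → Fin n → Qp2 p) :
    hform p n x (∑ k ∈ s, f k) = ∑ k ∈ s, hform p n x (f k) := by
  classical
  induction s using Finset.induction with
  | empty => simp [hform_zero_right]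
  | insert _ _ h ih => rw [Finset.sum_insert h, Finset.sum_insert h, hform_add_right, ih]

lemma mem_dualLat {L : Submodule (Zp2 p) (Fin n → Qp2 p)} {v : Fin n → Qp2 p} :
    v ∈ dualLat p n L ↔
      ∀ w ∈ L, hform p n v w ∈ (algebraMap (Zp2 p) (Qp2 p)).range := Iff.rfl

lemma dualLat_antitone {L M : Submodule (Zp2 p) (Fin n → Qp2 p)} (h : L ≤ M) :
    dualLat p n M ≤ dualLat p n L := fun _ hv => fun w hw => hv w (h hw)

lemma mem_scaleLat {c : Qp2 p} {L : Submodule (Zp2 p) (Fin n → Qp2 p)} {v : Fin n → Qp2 p} :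
    v ∈ scaleLat p n c L ↔ ∃ w ∈ L, c • w = v := by
  simp [scaleLat, Submodule.mem_map]

lemma scaleLat_scaleLat (c d : Qp2 p) (L : Submodule (Zp2 p) (Fin n → Qp2 p)) :
    scaleLat p n c (scaleLat p n d L) = scaleLat p n (c * d) L := by
  ext x
  simp only [mem_scaleLat]
  constructor
  · rintro ⟨w, ⟨w', hw', rfl⟩, rfl⟩
    exact ⟨w', hw', mul_smul c d w'⟩
  · rintro ⟨w, hw, rfl⟩
    exact ⟨d • w, ⟨w, hw, rfl⟩, (mul_smul c d w).symm⟩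

lemma scaleLat_one (L : Submodule (Zp2 p) (Fin n → Qp2 p)) : scaleLat p n 1 L = L := by
  unfold scaleLat
  convert Submodule.map_id L
  ext x
  simp

lemma scaleLat_injective {c : Qp2 p} (hc : c ≠ 0) {L M : Submodule (Zp2 p) (Fin n → Qp2 p)}
    (h : scaleLat p n c L = scaleLat p n c M) : L = M := by
  have := congrArg (scaleLat p n c⁻¹) h
  rwa [scaleLat_scaleLat, scaleLat_scaleLat, inv_mul_cancel₀ hc, scaleLat_one, scaleLat_one]
    at this

lemma scaleLat_mono (c : Qp2 p) {L M : Submodule (Zp2 p) (Fin n → Qp2 p)} (h : L ≤ M) :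
    scaleLat p n c L ≤ scaleLat p n c M := Submodule.map_mono h

lemma chain_contradiction {L B Y0 Y1 Y2 Y3 Y4 : Submodule (Zp2 p) (Fin n → Qp2 p)}
    (hB : B ≤ Y0) (h01 : Y0 < Y1) (h12 : Y1 < Y2) (h23 : Y2 < Y3) (h34 : Y3 < Y4)
    (h4 : Y4 ≤ L) (h : relIdx p n B L = 3) : False := by
  classical
  set Q := Submodule.comap L.subtype B with hQ
  have key : ∀ {U W : Submodule (Zp2 p) (Fin n → Qp2 p)}, U < W → W ≤ L →
      Submodule.comap L.subtype U < Submodule.comap L.subtype W := by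
    intro U W hUW hWL
    refine lt_of_le_of_ne (Submodule.comap_mono hUW.le) ?_
    obtain ⟨y, hyW, hyU⟩ := SetLike.exists_of_lt hUW
    intro hEq
    have hmem : (⟨y, hWL hyW⟩ : ↥L) ∈ Submodule.comap L.subtype W := by
      simpa [Submodule.mem_comap]
    rw [← hEq] at hmem
    simp only [Submodule.mem_comap, Submodule.coe_subtype] at hmem
    exact hyU hmem
  have h3L : Y3 ≤ L := h34.le.trans h4
  have h2L : Y2 ≤ L := h23.le.trans h3L
  have h1L : Y1 ≤ L := h12.le.trans h2L
  have h0L : Y0 ≤ L := h01.le.trans h1L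
  have hBL : B ≤ L := hB.trans h0L
  have hQ0 : Q ≤ Submodule.comap L.subtype Y0 := Submodule.comap_mono hB
  have hQ1 : Q ≤ Submodule.comap L.subtype Y1 := hQ0.trans (Submodule.comap_mono h01.le)
  have hQ2 : Q ≤ Submodule.comap L.subtype Y2 := hQ1.trans (Submodule.comap_mono h12.le)
  have hQ3 : Q ≤ Submodule.comap L.subtype Y3 := hQ2.trans (Submodule.comap_mono h23.le)
  have hQ4 : Q ≤ Submodule.comap L.subtype Y4 := hQ3.trans (Submodule.comap_mono h34.le)
  let g : Fin 5 → {p' : Submodule (Zp2 p) ↥L // Q ≤ p'} :=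
    ![⟨_, hQ0⟩, ⟨_, hQ1⟩, ⟨_, hQ2⟩, ⟨_, hQ3⟩, ⟨_, hQ4⟩]
  have hg : ∀ k : Fin 4, g k.castSucc < g k.succ := by
    intro k
    fin_cases k
    · exact Subtype.mk_lt_mk.mpr (key h01 h1L)
    · exact Subtype.mk_lt_mk.mpr (key h12 h2L)
    · exact Subtype.mk_lt_mk.mpr (key h23 h3L)
    · exact Subtype.mk_lt_mk.mpr (key h34 h4)
  let s : LTSeries (Submodule (Zp2 p) (↥L ⧸ Q)) :=
    { length := 4
      toFun := fun k => (Submodule.comapMkQRelIso Q).symm (g k)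
      step := fun k => (Submodule.comapMkQRelIso Q).symm.strictMono (hg k) }
  have hle := Order.LTSeries.length_le_krullDim s
  have hlen : s.length = 4 := rfl
  rw [hlen] at hle
  unfold relIdx mlen at h
  rcases hd : Order.krullDim (Submodule (Zp2 p) (↥L ⧸ Q)) with _ | e
  · rw [hd] at hle
    exact absurd hle (by simp [WithBot.none_eq_bot])
  · rw [hd] at hle h
    rw [show (some e : WithBot ℕ∞) = (e : WithBot ℕ∞) from rfl, WithBot.unbotD_coe] at h
    subst h
    have h43 : ((4:ℕ) : WithBot ℕ∞) = ((4:ℕ∞) : WithBot ℕ∞) := by norm_cast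
    rw [h43, show (some (3:ℕ∞) : WithBot ℕ∞) = ((3:ℕ∞) : WithBot ℕ∞) from rfl,
      WithBot.coe_le_coe] at hle
    have : ¬ ((4:ℕ∞) ≤ 3) := by norm_num
    exact this (by exact_mod_cast hle)

lemma algebraMap_smul_eq {r : Zp2 p} {x : Fin n → Qp2 p} :
    (algebraMap (Zp2 p) (Qp2 p) r) • x = r • x := algebraMap_smul _ r x

lemma smul_one_injective :
    Function.Injective fun r : Zp2 p => r • (1 : Qp2 p) := by
  intro a b hab
  apply IsFractionRing.injective (Zp2 p) (Qp2 p)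
  simpa [Algebra.smul_def] using hab

lemma linearIndependent_K_of_R {m : ℕ} (u : Fin m → (Fin n → Qp2 p))
    (hu : LinearIndependent (Zp2 p) u) : LinearIndependent (Qp2 p) u := by
  rw [linearIndependent_iff']
  intro s g hg i hi
  obtain ⟨N, hN⟩ := exists_pow_mul_mem_family p fun i : Fin m => g i
  choose r hr using fun j => hN j
  have hz : ∑ j ∈ s, r j • u j = 0 := by
    have h1 : ∑ j ∈ s, r j • u j = (p : Qp2 p) ^ N • ∑ j ∈ s, g j • u j := by
      rw [Finset.smul_sum]
      refine Finset.sum_congr rfl fun j _ => ?_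
      rw [← algebraMap_smul_eq (p := p) (n := n), hr j, mul_smul]
    rw [h1, hg, smul_zero]
  have hr0 : r i = 0 := linearIndependent_iff'.mp hu s r hz i hi
  have : (p : Qp2 p) ^ N * g i = 0 := by rw [← hr i, hr0, map_zero]
  rcases mul_eq_zero.mp this with h | h
  · exact absurd h (pow_ne_zero _ (pK_ne_zero p))
  · exact h

lemma lattice_exists_basis {M : Submodule (Zp2 p) (Fin n → Qp2 p)} (hM : IsLattice p n M) :
    ∃ b : Basis (Fin n) (Qp2 p) (Fin n → Qp2 p),
      M = Submodule.span (Zp2 p) (Set.range ⇑b) := by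
  classical
  rcases Nat.eq_zero_or_pos n with hn0 | hn0
  · subst hn0
    haveI : IsEmpty (Fin 0) := inferInstance
    haveI : Subsingleton (Fin 0 → Qp2 p) := inferInstance
    refine ⟨Basis.empty _, ?_⟩
    ext x
    have hx : x = 0 := Subsingleton.elim x 0
    subst hx
    simp only [Submodule.zero_mem]
  haveI : Nonempty (Fin n) := ⟨⟨0, hn0⟩⟩
  obtain ⟨hFG, hspanK⟩ := hM
  -- step 1 : a K-basis of V inside M
  obtain ⟨t, hts, htspan, htli⟩ := exists_linearIndependent (Qp2 p) (M : Set (Fin n → Qp2 p))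
  rw [hspanK] at htspan
  haveI : Fintype ↥t := (htli.setFinite).fintype
  have hbT : ⊤ ≤ Submodule.span (Qp2 p) (Set.range (Subtype.val : ↥t → _)) := by
    rw [Subtype.range_coe]
    rw [htspan]
  let bT : Basis ↥t (Qp2 p) (Fin n → Qp2 p) := Basis.mk htli hbT
  have hfinrank : Module.finrank (Qp2 p) (Fin n → Qp2 p) = n := by
    rw [Module.finrank_pi, Fintype.card_fin]
  have hcard : Fintype.card ↥t = n := by
    rw [← Module.finrank_eq_card_basis bT, hfinrank]
  let c : Basis (Fin n) (Qp2 p) (Fin n → Qp2 p) := bT.reindex (Fintype.equivFinOfCardEq hcard)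
  have hcM : ∀ k, c k ∈ M := by
    intro k
    have : c k = ((Fintype.equivFinOfCardEq hcard).symm k : Fin n → Qp2 p) := by
      simp [c, bT, Basis.reindex_apply, Basis.mk_apply]
    rw [this]
    exact hts ((Fintype.equivFinOfCardEq hcard).symm k).2
  -- step 2 : L ≤ M
  set L := Submodule.span (Zp2 p) (Set.range ⇑c) with hL
  have hLM : L ≤ M := by
    rw [hL, Submodule.span_le]
    rintro x ⟨k, rfl⟩
    exact hcM k
  -- step 3-5 : a power of p scales M into L
  obtain ⟨S, hS⟩ := hFG
  obtain ⟨N, hN⟩ := exists_pow_mul_mem_family p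
    (fun q : ↥S × Fin n => c.repr (q.1 : Fin n → Qp2 p) q.2)
  have hscale : scaleLat p n ((p : Qp2 p) ^ N) M ≤ L := by
    unfold scaleLat
    rw [← hS, Submodule.map_span, Submodule.span_le]
    rintro x ⟨g, hg, rfl⟩
    simp only [LinearMap.coe_restrictScalars, LinearMap.lsmul_apply]
    have hgrepr : (p : Qp2 p) ^ N • g = ∑ k, ((p : Qp2 p) ^ N * c.repr g k) • c k := by
      conv_lhs => rw [← Basis.sum_repr c g]
      rw [Finset.smul_sum]
      exact Finset.sum_congr rfl fun k _ => by rw [smul_smul]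
    rw [hgrepr]
    refine Submodule.sum_mem _ fun k _ => ?_
    obtain ⟨r, hr⟩ := hN (⟨⟨g, hg⟩, k⟩ : ↥S × Fin n)
    rw [← hr, algebraMap_smul_eq]
    exact Submodule.smul_mem _ _ (Submodule.subset_span ⟨k, rfl⟩)
  -- step 6 : basis of L over R
  have hliR : LinearIndependent (Zp2 p) ⇑c :=
    (c.linearIndependent).restrict_scalars (smul_one_injective p)
  let basisL : Basis (Fin n) (Zp2 p) ↥L := Basis.span hliR
  -- step 7-8 : basis of M over R
  obtain ⟨m, bM'⟩ := Submodule.basisOfPidOfLE hscale basisL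
  have hinj : Function.Injective
      (LinearMap.restrictScalars (Zp2 p)
        (LinearMap.lsmul (Qp2 p) (Fin n → Qp2 p) ((p : Qp2 p) ^ N))) := by
    intro a b hab
    exact smul_right_injective _ (pow_ne_zero N (pK_ne_zero p)) hab
  let equivM : ↥M ≃ₗ[Zp2 p] ↥(scaleLat p n ((p : Qp2 p) ^ N) M) :=
    Submodule.equivMapOfInjective _ hinj M
  let bM : Basis (Fin m) (Zp2 p) ↥M := bM'.map equivM.symm
  set u : Fin m → (Fin n → Qp2 p) := fun k => (bM k : Fin n → Qp2 p) with hu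
  have hspanu : Submodule.span (Zp2 p) (Set.range u) = M := by
    have h1 := bM.span_eq
    have h2 : Submodule.map M.subtype (Submodule.span (Zp2 p) (Set.range ⇑bM)) = M := by
      rw [h1, Submodule.map_subtype_top]
    rw [Submodule.map_span] at h2
    rw [← h2]
    congr 1
    rw [← Set.range_comp]
    rfl
  have hliRu : LinearIndependent (Zp2 p) u := by
    have := bM.linearIndependent.map' M.subtype M.ker_subtype
    exact this
  have hliKu : LinearIndependent (Qp2 p) u := linearIndependent_K_of_R p n u hliRu
  have hspanKu : Submodule.span (Qp2 p) (Set.range u) = ⊤ := by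
    have hsub : (M : Set (Fin n → Qp2 p)) ⊆ ↑(Submodule.span (Qp2 p) (Set.range u)) := by
      rw [← hspanu]
      intro x hx
      exact Submodule.span_le_restrictScalars (Zp2 p) (Qp2 p) (Set.range u) hx
    rw [← top_le_iff, ← hspanK, Submodule.span_le]
    exact hsub
  have hmn : m = n := by
    have le1 : m ≤ n := by
      have := hliKu.fintype_card_le_finrank
      rwa [Fintype.card_fin, hfinrank] at this
    have le2 : n ≤ m := by
      have := finrank_le_of_span_eq_top hspanKu
      rwa [Fintype.card_fin, hfinrank] at this
    omega
  subst hmn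
  have hcardeq : Fintype.card (Fin m) = Module.finrank (Qp2 p) (Fin m → Qp2 p) := by
    rw [Fintype.card_fin, hfinrank]
  refine ⟨basisOfLinearIndependentOfCardEqFinrank hliKu hcardeq, ?_⟩
  rw [coe_basisOfLinearIndependentOfCardEqFinrank, hspanu]

/-! ### Duality machinery -/

lemma hform_sub_left (x x' y : Fin n → Qp2 p) :
    hform p n (x - x') y = hform p n x y - hform p n x' y := by
  simp [hform, sub_mul, Finset.sum_sub_distrib]

lemma hform_sum_left {ι : Type*} (s : Finset ι) (y : Fin n → Qp2 p) (f : ι → Fin n → Qp2 p) :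
    hform p n (∑ k ∈ s, f k) y = ∑ k ∈ s, hform p n (f k) y := by
  classical
  induction s using Finset.induction with
  | empty => simp [hform_zero_left]
  | insert _ _ h ih => rw [Finset.sum_insert h, Finset.sum_insert h, hform_add_left, ih]

lemma hform_conj (hsym : ∀ i j, gram p n i j = gram p n j i)
    (hfix : ∀ i j, frob p (gram p n i j) = gram p n i j) (x y : Fin n → Qp2 p) :
    frob p (hform p n y x) = hform p n x y := by
  calc frob p (hform p n y x)
      = ∑ i, ∑ j, frob p (y i) * gram p n i j * x j := by
        unfold hform
        rw [frob_sum p]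
        refine Finset.sum_congr rfl fun i _ => ?_
        rw [frob_sum p]
        refine Finset.sum_congr rfl fun j _ => ?_
        rw [map_mul, map_mul, hfix, frob_frob]
    _ = ∑ j, ∑ i, frob p (y i) * gram p n i j * x j := Finset.sum_comm
    _ = hform p n x y := by
        unfold hform
        refine Finset.sum_congr rfl fun j _ => Finset.sum_congr rfl fun i _ => ?_
        rw [hsym i j]
        ring

/-- The nondegeneracy property. -/
def ND (p n : ℕ) [Fact p.Prime] : Prop :=
  ∀ v : Fin n → Qp2 p, (∀ w, hform p n v w = 0) → v = 0

def hformMap (b : Basis (Fin n) (Qp2 p) (Fin n → Qp2 p)) :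
    (Fin n → Qp2 p) →ₗ[Qp2 p] (Fin n → Qp2 p) where
  toFun v := fun k => hform p n v (b k)
  map_add' x y := by funext k; exact hform_add_left p n x y (b k)
  map_smul' c x := by funext k; simpa using hform_smul_left p n c x (b k)

lemma hformMap_apply (b : Basis (Fin n) (Qp2 p) (Fin n → Qp2 p)) (v : Fin n → Qp2 p)
    (k : Fin n) : hformMap p n b v k = hform p n v (b k) := rfl

lemma hform_eq_zero_of_basis (b : Basis (Fin n) (Qp2 p) (Fin n → Qp2 p))
    {v : Fin n → Qp2 p} (h : ∀ k, hform p n v (b k) = 0) (w : Fin n → Qp2 p) :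
    hform p n v w = 0 := by
  conv_lhs => rw [← Basis.sum_repr b w]
  rw [hform_sum_right]
  refine Finset.sum_eq_zero fun k _ => ?_
  rw [hform_smul_right, h k, mul_zero]

lemma hformMap_injective (hnd : ND p n) (b : Basis (Fin n) (Qp2 p) (Fin n → Qp2 p)) :
    Function.Injective (hformMap p n b) := by
  intro x y hxy
  rw [← sub_eq_zero]
  apply hnd
  apply hform_eq_zero_of_basis p n b
  intro k
  have hk := congrFun hxy k
  rw [hformMap_apply, hformMap_apply] at hk
  rw [hform_sub_left, hk, sub_self]

def hformEquiv (hnd : ND p n) (b : Basis (Fin n) (Qp2 p) (Fin n → Qp2 p)) :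
    (Fin n → Qp2 p) ≃ₗ[Qp2 p] (Fin n → Qp2 p) :=
  LinearMap.linearEquivOfInjective (hformMap p n b) (hformMap_injective p n hnd b) rfl

lemma hformEquiv_apply (hnd : ND p n) (b : Basis (Fin n) (Qp2 p) (Fin n → Qp2 p))
    (v : Fin n → Qp2 p) (k : Fin n) : hformEquiv p n hnd b v k = hform p n v (b k) := by
  unfold hformEquiv
  rw [LinearMap.linearEquivOfInjective_apply]
  rfl

/-- The standard lattice in `Fin n → Qp2 p`. -/
def SL (p n : ℕ) [Fact p.Prime] : Submodule (Zp2 p) (Fin n → Qp2 p) :=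
  Submodule.pi Set.univ fun _ => LinearMap.range (Algebra.linearMap (Zp2 p) (Qp2 p))

lemma mem_SL {x : Fin n → Qp2 p} :
    x ∈ SL p n ↔ ∀ k, x k ∈ (algebraMap (Zp2 p) (Qp2 p)).range := by
  constructor
  · intro hx k
    obtain ⟨r, hr⟩ := hx k (Set.mem_univ k)
    exact ⟨r, hr⟩
  · intro hx k _
    obtain ⟨r, hr⟩ := hx k
    exact ⟨r, hr⟩

lemma SL_eq_span :
    SL p n = Submodule.span (Zp2 p) (Set.range fun k => Pi.single k (1 : Qp2 p)) := by
  apply le_antisymm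
  · intro x hx
    rw [mem_SL p n] at hx
    choose r hr using hx
    have hxe : x = ∑ k, r k • (Pi.single k (1 : Qp2 p) : Fin n → Qp2 p) := by
      funext j
      rw [Finset.sum_apply, Finset.sum_eq_single j]
      · rw [Pi.smul_apply, Pi.single_eq_same, Algebra.smul_def, mul_one, hr]
      · intro b _ hb
        rw [Pi.smul_apply, Pi.single_eq_of_ne (Ne.symm hb), smul_zero]
      · intro h; exact absurd (Finset.mem_univ j) h
    rw [hxe]
    exact Submodule.sum_mem _ fun k _ =>
      Submodule.smul_mem _ _ (Submodule.subset_span ⟨k, rfl⟩)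
  · rw [Submodule.span_le]
    rintro _ ⟨k, rfl⟩
    rw [SetLike.mem_coe, mem_SL p n]
    intro j
    show (Pi.single k (1 : Qp2 p) : Fin n → Qp2 p) j ∈ _
    rcases eq_or_ne j k with h | h
    · subst h; rw [Pi.single_eq_same]; exact ⟨1, map_one _⟩
    · rw [Pi.single_eq_of_ne h]; exact ⟨0, map_zero _⟩

lemma mem_dualLat_span (b : Basis (Fin n) (Qp2 p) (Fin n → Qp2 p)) (v : Fin n → Qp2 p) :
    v ∈ dualLat p n (Submodule.span (Zp2 p) (Set.range ⇑b)) ↔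
      ∀ k, hform p n v (b k) ∈ (algebraMap (Zp2 p) (Qp2 p)).range := by
  constructor
  · intro hv k
    exact hv (b k) (Submodule.subset_span ⟨k, rfl⟩)
  · intro hv w hw
    induction hw using Submodule.span_induction with
    | mem x hx => obtain ⟨k, rfl⟩ := hx; exact hv k
    | zero => rw [hform_zero_right]; exact zero_mem _
    | add x y _ _ hx hy => rw [hform_add_right]; exact add_mem hx hy
    | smul r x _ hx =>
        rw [← algebraMap_smul_eq p n, hform_smul_right, frob_algebraMap]
        exact mul_mem ⟨_, rfl⟩ hx

/-- Dual basis vectors. -/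
def dualVec (hnd : ND p n) (b : Basis (Fin n) (Qp2 p) (Fin n → Qp2 p)) (k : Fin n) :
    Fin n → Qp2 p :=
  (hformEquiv p n hnd b).symm (Pi.single k 1)

lemma hform_dualVec_basis (hnd : ND p n) (b : Basis (Fin n) (Qp2 p) (Fin n → Qp2 p))
    (j k : Fin n) : hform p n (dualVec p n hnd b j) (b k) = (Pi.single j (1 : Qp2 p) : Fin n → Qp2 p) k := by
  rw [← hformEquiv_apply p n hnd b]
  unfold dualVec
  rw [LinearEquiv.apply_symm_apply]

lemma hform_basis_dualVec (hsym : ∀ i j, gram p n i j = gram p n j i)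
    (hfix : ∀ i j, frob p (gram p n i j) = gram p n i j)
    (hnd : ND p n) (b : Basis (Fin n) (Qp2 p) (Fin n → Qp2 p))
    (j k : Fin n) : hform p n (b k) (dualVec p n hnd b j) = (Pi.single j (1 : Qp2 p) : Fin n → Qp2 p) k := by
  rw [← hform_conj p n hsym hfix, hform_dualVec_basis p n hnd]
  rcases eq_or_ne j k with h | h
  · subst h; rw [Pi.single_eq_same, map_one]
  · rw [Pi.single_eq_of_ne (Ne.symm h), map_zero]

lemma hformEquiv_restrict_apply (hnd : ND p n) (b : Basis (Fin n) (Qp2 p) (Fin n → Qp2 p))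
    (v : Fin n → Qp2 p) (k : Fin n) :
    (LinearEquiv.restrictScalars (Zp2 p) (hformEquiv p n hnd b)) v k = hform p n v (b k) := by
  rw [LinearEquiv.restrictScalars_apply]
  exact hformEquiv_apply p n hnd b v k

lemma dualLat_span_eq (hnd : ND p n) (b : Basis (Fin n) (Qp2 p) (Fin n → Qp2 p)) :
    dualLat p n (Submodule.span (Zp2 p) (Set.range ⇑b)) =
      Submodule.span (Zp2 p) (Set.range (dualVec p n hnd b)) := by
  have heq : Submodule.span (Zp2 p) (Set.range (dualVec p n hnd b)) =
      Submodule.map (((hformEquiv p n hnd b).symm.restrictScalars (Zp2 p)) :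
        (Fin n → Qp2 p) →ₗ[Zp2 p] (Fin n → Qp2 p))
        (Submodule.span (Zp2 p) (Set.range fun k => Pi.single k (1 : Qp2 p))) := by
    rw [Submodule.map_span, ← Set.range_comp]
    rfl
  ext v
  rw [mem_dualLat_span p n b, heq, ← SL_eq_span p n]
  rw [show (((hformEquiv p n hnd b).symm.restrictScalars (Zp2 p)) :
        (Fin n → Qp2 p) →ₗ[Zp2 p] (Fin n → Qp2 p))
      = (((hformEquiv p n hnd b).restrictScalars (Zp2 p)).symm :
        (Fin n → Qp2 p) ≃ₗ[Zp2 p] (Fin n → Qp2 p)) from rfl]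
  rw [Submodule.mem_map_equiv]
  rw [LinearEquiv.symm_symm]
  rw [mem_SL p n]
  constructor
  · intro h k
    rw [hformEquiv_restrict_apply p n hnd b v k]
    exact h k
  · intro h k
    rw [← hformEquiv_restrict_apply p n hnd b v k]
    exact h k

lemma mem_span_basis_iff (b : Basis (Fin n) (Qp2 p) (Fin n → Qp2 p)) (v : Fin n → Qp2 p) :
    v ∈ Submodule.span (Zp2 p) (Set.range ⇑b) ↔
      ∀ k, b.repr v k ∈ (algebraMap (Zp2 p) (Qp2 p)).range := by
  constructor
  · intro hv
    induction hv using Submodule.span_induction with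
    | mem x hx =>
        obtain ⟨j, rfl⟩ := hx
        intro k
        rw [Basis.repr_self, Finsupp.single_apply]
        rcases eq_or_ne j k with h | h
        · rw [if_pos h]; exact ⟨1, map_one _⟩
        · rw [if_neg h]; exact ⟨0, map_zero _⟩
    | zero => intro k; rw [map_zero]; exact ⟨0, by simp⟩
    | add x y _ _ hx hy =>
        intro k
        rw [map_add, Finsupp.add_apply]
        exact add_mem (hx k) (hy k)
    | smul r x _ hx =>
        intro k
        rw [← algebraMap_smul_eq p n, map_smul, Finsupp.smul_apply, smul_eq_mul]
        exact mul_mem ⟨r, rfl⟩ (hx k)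
  · intro hv
    choose r hr using hv
    have hve : v = ∑ k, r k • b k := by
      conv_lhs => rw [← Basis.sum_repr b v]
      refine Finset.sum_congr rfl fun k _ => ?_
      rw [← hr k, algebraMap_smul]
    rw [hve]
    exact Submodule.sum_mem _ fun k _ =>
      Submodule.smul_mem _ _ (Submodule.subset_span ⟨k, rfl⟩)

lemma hform_eval_dualVec (hsym : ∀ i j, gram p n i j = gram p n j i)
    (hfix : ∀ i j, frob p (gram p n i j) = gram p n i j)
    (hnd : ND p n) (b : Basis (Fin n) (Qp2 p) (Fin n → Qp2 p))
    (v : Fin n → Qp2 p) (k : Fin n) :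
    hform p n v (dualVec p n hnd b k) = b.repr v k := by
  conv_lhs => rw [← Basis.sum_repr b v]
  rw [hform_sum_left]
  have : ∀ j, hform p n (b.repr v j • b j) (dualVec p n hnd b k) =
      b.repr v j * (Pi.single k (1 : Qp2 p) : Fin n → Qp2 p) j := by
    intro j
    rw [hform_smul_left, hform_basis_dualVec p n hsym hfix hnd]
  rw [Finset.sum_congr rfl fun j _ => this j]
  rw [Finset.sum_eq_single k]
  · rw [Pi.single_eq_same, mul_one]
  · intro j _ hj
    rw [Pi.single_eq_of_ne hj, mul_zero]
  · intro h; exact absurd (Finset.mem_univ k) h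

/-- The dual basis as a `Basis`. -/
def dualBasis (hnd : ND p n) (b : Basis (Fin n) (Qp2 p) (Fin n → Qp2 p)) :
    Basis (Fin n) (Qp2 p) (Fin n → Qp2 p) :=
  (Pi.basisFun (Qp2 p) (Fin n)).map (hformEquiv p n hnd b).symm

lemma dualBasis_coe (hnd : ND p n) (b : Basis (Fin n) (Qp2 p) (Fin n → Qp2 p)) :
    ⇑(dualBasis p n hnd b) = dualVec p n hnd b := by
  funext k
  unfold dualBasis dualVec
  rw [Basis.map_apply, Pi.basisFun_apply]

lemma dualLat_dualLat_span (hsym : ∀ i j, gram p n i j = gram p n j i)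
    (hfix : ∀ i j, frob p (gram p n i j) = gram p n i j)
    (hnd : ND p n) (b : Basis (Fin n) (Qp2 p) (Fin n → Qp2 p)) :
    dualLat p n (dualLat p n (Submodule.span (Zp2 p) (Set.range ⇑b))) =
      Submodule.span (Zp2 p) (Set.range ⇑b) := by
  rw [dualLat_span_eq p n hnd b]
  have hrange : Set.range (dualVec p n hnd b) = Set.range ⇑(dualBasis p n hnd b) := by
    rw [dualBasis_coe p n hnd b]
  rw [hrange]
  ext v
  rw [mem_dualLat_span p n (dualBasis p n hnd b), mem_span_basis_iff p n b]
  have heval : ∀ k, hform p n v (dualBasis p n hnd b k) = b.repr v k := by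
    intro k
    rw [show dualBasis p n hnd b k = dualVec p n hnd b k from congrFun (dualBasis_coe p n hnd b) k]
    exact hform_eval_dualVec p n hsym hfix hnd b v k
  constructor
  · intro h k; rw [← heval k]; exact h k
  · intro h k; rw [heval k]; exact h k

lemma dualLat_dualLat (hsym : ∀ i j, gram p n i j = gram p n j i)
    (hfix : ∀ i j, frob p (gram p n i j) = gram p n i j)
    (hnd : ND p n) {M : Submodule (Zp2 p) (Fin n → Qp2 p)} (hM : IsLattice p n M) :
    dualLat p n (dualLat p n M) = M := by
  obtain ⟨b, rfl⟩ := lattice_exists_basis p n hM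
  exact dualLat_dualLat_span p n hsym hfix hnd b

lemma hform_single (v : Fin n → Qp2 p) (j : Fin n) :
    hform p n v (Pi.single j 1) = ∑ i, v i * gram p n i j := by
  unfold hform
  refine Finset.sum_congr rfl fun i _ => ?_
  rw [Finset.sum_eq_single j]
  · rw [Pi.single_eq_same, map_one, mul_one]
  · intro b _ hb
    rw [Pi.single_eq_of_ne hb, map_zero, mul_zero]
  · intro h; exact absurd (Finset.mem_univ j) h

lemma nd_of_gram (h : ∀ v : Fin n → Qp2 p, (∀ j, ∑ i, v i * gram p n i j = 0) → v = 0) :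
    ND p n := by
  intro v hv
  refine h v fun j => ?_
  rw [← hform_single p n v j]
  exact hv _

lemma main_step
    (hsym : ∀ i j, gram p n i j = gram p n j i)
    (hfix : ∀ i j, frob p (gram p n i j) = gram p n i j)
    (hnd : ND p n) (i : ℤ) {Λ₀ M Y : Submodule (Zp2 p) (Fin n → Qp2 p)}
    (hΛ₀ : inL p n i Λ₀) (hM : inL p n i M) (htM : typeOf p n i M = 3)
    (hsubM : Λ₀ ≤ M) (hY1 : Λ₀ < Y) (hY2 : Y < M) : False := by
  have hdual : dualLat p n M ≤ dualLat p n Λ₀ := dualLat_antitone p n hsubM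
  have hBA : scaleLat p n ((p : Qp2 p) ^ (i + 1)) (dualLat p n M) ≤
      scaleLat p n ((p : Qp2 p) ^ (i + 1)) (dualLat p n Λ₀) := scaleLat_mono p n _ hdual
  have hA0 : scaleLat p n ((p : Qp2 p) ^ (i + 1)) (dualLat p n Λ₀) < Λ₀ := hΛ₀.2.1
  rcases eq_or_lt_of_le hBA with hEq | hLt
  · have hdM : dualLat p n M = dualLat p n Λ₀ :=
      scaleLat_injective p n (zpow_ne_zero _ (pK_ne_zero p)) hEq
    have hMΛ : M = Λ₀ := by
      have h1 := dualLat_dualLat p n hsym hfix hnd hM.1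
      have h2 := dualLat_dualLat p n hsym hfix hnd hΛ₀.1
      rw [← h1, ← h2, hdM]
    rw [hMΛ] at hY2
    exact absurd (hY1.trans hY2) (lt_irrefl _)
  · exact chain_contradiction p n (le_refl _) hLt hA0 hY1 hY2 (le_refl M) htM

lemma gram3_sym (i j : Fin 3) : gram p 3 i j = gram p 3 j i := by
  simp only [gram, Matrix.of_apply, if_pos (by decide : Odd 3)]
  rw [Nat.add_comm]

lemma gram3_fix (i j : Fin 3) : frob p (gram p 3 i j) = gram p 3 i j := by
  simp only [gram, Matrix.of_apply, if_pos (by decide : Odd 3)]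
  rw [apply_ite (frob p), map_one, map_zero]

lemma gram3_nd : ∀ v : Fin 3 → Qp2 p, (∀ j, ∑ i, v i * gram p 3 i j = 0) → v = 0 := by
  intro v hv
  have h0 := hv 2
  have h1 := hv 1
  have h2 := hv 0
  simp [gram, (by decide : Odd 3), Fin.sum_univ_three,
    show ((0:Fin 3):ℕ)=0 from rfl, show ((1:Fin 3):ℕ)=1 from rfl,
    show ((2:Fin 3):ℕ)=2 from rfl] at h0 h1 h2
  funext j
  fin_cases j
  · exact h0
  · exact h1
  · exact h2

lemma gram4_sym (i j : Fin 4) : gram p 4 i j = gram p 4 j i := by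
  fin_cases i <;> fin_cases j <;>
    simp [gram, (by decide : ¬ Odd 4),
      show ((0:Fin 4):ℕ)=0 from rfl, show ((1:Fin 4):ℕ)=1 from rfl,
      show ((2:Fin 4):ℕ)=2 from rfl, show ((3:Fin 4):ℕ)=3 from rfl]

lemma gram4_fix (i j : Fin 4) : frob p (gram p 4 i j) = gram p 4 i j := by
  fin_cases i <;> fin_cases j <;>
    simp [gram, (by decide : ¬ Odd 4),
      show ((0:Fin 4):ℕ)=0 from rfl, show ((1:Fin 4):ℕ)=1 from rfl,
      show ((2:Fin 4):ℕ)=2 from rfl, show ((3:Fin 4):ℕ)=3 from rfl]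

lemma gram4_nd : ∀ v : Fin 4 → Qp2 p, (∀ j, ∑ i, v i * gram p 4 i j = 0) → v = 0 := by
  intro v hv
  have h0 := hv 3
  have h1 := hv 1
  have h2 := hv 2
  have h3 := hv 0
  simp [gram, (by decide : ¬ Odd 4), Fin.sum_univ_four,
    show ((0:Fin 4):ℕ)=0 from rfl, show ((1:Fin 4):ℕ)=1 from rfl,
    show ((2:Fin 4):ℕ)=2 from rfl, show ((3:Fin 4):ℕ)=3 from rfl] at h0 h1 h2 h3
  funext j
  fin_cases j
  · exact h0
  · exact h1
  · rcases h2 with h | h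
    · exact h
    · exact absurd h (pK_ne_zero p)
  · exact h3

end St16

/-- **Statement 16.**  For `n = 3` or `n = 4`: if `Λ₀ ∈ 𝓛_i` has type `1` and
`Λ ≠ Λ'` in `𝓛_i` both have maximal type `3` and contain `Λ₀`, then `Λ ∩ Λ' = Λ₀`. -/
theorem statement16 (p : ℕ) [Fact p.Prime] (n : ℕ) (h34 : n = 3 ∨ n = 4) (i : ℤ)
    (hi : Even ((n : ℤ) * i)) (Λ₀ Λ Λ' : Submodule (Zp2 p) (Fin n → Qp2 p))
    (hΛ₀ : inL p n i Λ₀) (ht₀ : typeOf p n i Λ₀ = 1)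
    (hΛ : inL p n i Λ) (ht : typeOf p n i Λ = 3)
    (hΛ' : inL p n i Λ') (ht' : typeOf p n i Λ' = 3)
    (hne : Λ ≠ Λ') (hsub : Λ₀ ≤ Λ) (hsub' : Λ₀ ≤ Λ') :
    Λ ⊓ Λ' = Λ₀ := by
  have key : (∀ a b, gram p n a b = gram p n b a) ∧
      (∀ a b, frob p (gram p n a b) = gram p n a b) ∧ St16.ND p n := by
    rcases h34 with rfl | rfl
    · exact ⟨St16.gram3_sym p, St16.gram3_fix p, St16.nd_of_gram p 3 (St16.gram3_nd p)⟩
    · exact ⟨St16.gram4_sym p, St16.gram4_fix p, St16.nd_of_gram p 4 (St16.gram4_nd p)⟩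
  obtain ⟨hsym, hfix, hnd⟩ := key
  by_contra hne0
  have hX : Λ₀ ≤ Λ ⊓ Λ' := le_inf hsub hsub'
  have hX0 : Λ₀ < Λ ⊓ Λ' := lt_of_le_of_ne hX fun h => hne0 h.symm
  rcases lt_or_eq_of_le (inf_le_left : Λ ⊓ Λ' ≤ Λ) with hlt | heq
  · exact St16.main_step p n hsym hfix hnd i hΛ₀ hΛ ht hsub hX0 hlt
  · have hLL : Λ ≤ Λ' := heq ▸ inf_le_right
    have hlt' : Λ < Λ' := lt_of_le_of_ne hLL hne
    have hlt0 : Λ₀ < Λ := heq ▸ hX0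
    exact St16.main_step p n hsym hfix hnd i hΛ₀ hΛ' ht' hsub' hlt0 hlt'
end
end
end
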